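/- arXiv:1610.00881 — 6 statements merged into one kernel-verified Lean document; each statement's English description precedes it below -/
import Mathlib

section
/- For α ∈ (0,1) and ν > -1, the integral ∫₀¹ ((1-u)^ν - 1) / u^{1+α} du equals (1/α)(1 - Γ(1+ν)Γ(1-α)/Γ(1-α+ν)). -/
open Real MeasureTheory Set

open Filter Topology

theorem ftc_Ioo {a b A B : ℝ} (f f' : ℝ → ℝ) (hab : a < b)
    (hd : ∀ x ∈ Ioo a b, HasDerivAt f (f' x) x)
    (hi : IntegrableOn f' (Ioo a b))
    (hA : Tendsto f (𝓝[>] a) (𝓝 A)) (hB : Tendsto f (𝓝[<] b) (𝓝 B)) :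
    ∫ x in Ioo a b, f' x = B - A := by
  set c : ℕ → ℝ := fun n => a + (b - a) / (n + 2) with hc
  set d : ℕ → ℝ := fun n => b - (b - a) / (n + 2) with hd'
  have hba : 0 < b - a := by linarith
  have hpos : ∀ n : ℕ, 0 < (b - a) / (n + 2) := fun n => by positivity
  have hle : ∀ n : ℕ, (b - a) / (n + 2) ≤ (b - a) / 2 := by
    intro n
    apply div_le_div_of_nonneg_left hba.le (by norm_num)
    · linarith [Nat.cast_nonneg (α := ℝ) n]
  have hcmem : ∀ n, c n ∈ Ioo a b := by
    intro n; constructor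
    · simp only [hc]; linarith [hpos n]
    · simp only [hc]; nlinarith [hle n, hpos n]
  have hdmem : ∀ n, d n ∈ Ioo a b := by
    intro n; constructor
    · simp only [hd']; nlinarith [hle n, hpos n]
    · simp only [hd']; linarith [hpos n]
  have hcd : ∀ n, c n ≤ d n := by
    intro n; simp only [hc, hd']; nlinarith [hle n, hpos n]
  have htend : Tendsto (fun n : ℕ => (b - a) / (n + 2)) atTop (𝓝 0) := by
    apply Tendsto.div_atTop (tendsto_const_nhds)
    exact tendsto_atTop_add_const_right _ 2 tendsto_natCast_atTop_atTop
  have hctend : Tendsto c atTop (𝓝[>] a) := by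
    rw [tendsto_nhdsWithin_iff]
    constructor
    · simpa using tendsto_const_nhds.add htend
    · exact Eventually.of_forall fun n => (hcmem n).1
  have hdtend : Tendsto d atTop (𝓝[<] b) := by
    rw [tendsto_nhdsWithin_iff]
    constructor
    · simpa using tendsto_const_nhds.sub htend
    · exact Eventually.of_forall fun n => (hdmem n).2
  have hcover : AECover (volume.restrict (Ioo a b)) atTop fun n => Ioo (c n) (d n) :=
    MeasureTheory.aecover_Ioo_of_Ioo (hctend.mono_right nhdsWithin_le_nhds)
      (hdtend.mono_right nhdsWithin_le_nhds)
  have h1 : Tendsto (fun n => ∫ x in Ioo (c n) (d n), f' x ∂(volume.restrict (Ioo a b)))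
      atTop (𝓝 (∫ x in Ioo a b, f' x)) := hcover.integral_tendsto_of_countably_generated hi
  have heq : ∀ n, ∫ x in Ioo (c n) (d n), f' x ∂(volume.restrict (Ioo a b)) = f (d n) - f (c n) := by
    intro n
    have hsub : Ioo (c n) (d n) ⊆ Ioo a b :=
      Ioo_subset_Ioo (hcmem n).1.le (hdmem n).2.le
    rw [Measure.restrict_restrict measurableSet_Ioo, inter_eq_self_of_subset_left hsub,
      ← integral_Ioc_eq_integral_Ioo, ← intervalIntegral.integral_of_le (hcd n)]
    apply intervalIntegral.integral_eq_sub_of_hasDerivAt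
    · intro x hx
      rw [uIcc_of_le (hcd n)] at hx
      exact hd x ⟨lt_of_lt_of_le (hcmem n).1 hx.1, lt_of_le_of_lt hx.2 (hdmem n).2⟩
    · rw [intervalIntegrable_iff_integrableOn_Ioc_of_le (hcd n)]
      apply hi.mono_set
      refine (Ioc_subset_Ioo_right ?_).trans (Ioo_subset_Ioo (hcmem n).1.le le_rfl)
      exact (hdmem n).2
  have h2 : Tendsto (fun n => f (d n) - f (c n)) atTop (𝓝 (B - A)) :=
    (hB.comp hdtend).sub (hA.comp hctend)
  rw [funext heq] at h1
  exact tendsto_nhds_unique h1 h2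

lemma rpow_bound {a b r : ℝ} (ha : 0 < a) : ∀ x : ℝ, a ≤ x → x ≤ b →
    x ^ r ≤ max (a ^ r) (b ^ r) := by
  intro x hx1 hx2
  rcases le_or_gt 0 r with h | h
  · exact le_max_of_le_right (Real.rpow_le_rpow (ha.le.trans hx1) hx2 h)
  · exact le_max_of_le_left (Real.rpow_le_rpow_of_nonpos ha hx1 h.le)

lemma contOn_aux {r s : ℝ} : ContinuousOn (fun x : ℝ => x ^ r * (1 - x) ^ s) (Ioo (0:ℝ) 1) := by
  intro x hx
  apply ContinuousWithinAt.mul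
  · exact (Real.continuousAt_rpow_const x r (Or.inl hx.1.ne')).continuousWithinAt
  · exact ((Real.continuousAt_rpow_const (1-x) s (Or.inl (by simp only [ne_eq, sub_eq_zero]; intro h; exact hx.2.ne h.symm))).comp
      (by fun_prop)).continuousWithinAt

theorem integrableOn_beta {p q : ℝ} (hp : 0 < p) (hq : 0 < q) :
    IntegrableOn (fun x : ℝ => x ^ (p - 1) * (1 - x) ^ (q - 1)) (Ioo (0:ℝ) 1) := by
  have hmeas : AEStronglyMeasurable (fun x : ℝ => x ^ (p - 1) * (1 - x) ^ (q - 1))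
      (volume.restrict (Ioo (0:ℝ) 1)) :=
    contOn_aux.aestronglyMeasurable measurableSet_Ioo
  have h1 : IntegrableOn (fun x : ℝ => x ^ (p - 1) * (1 - x) ^ (q - 1)) (Ioo (0:ℝ) (1/2)) := by
    set M := max (((1:ℝ)/2) ^ (q - 1)) ((1:ℝ) ^ (q - 1)) with hM
    have hg : IntegrableOn (fun x : ℝ => M * x ^ (p - 1)) (Ioo (0:ℝ) (1/2)) := by
      have := (intervalIntegral.intervalIntegrable_rpow' (a := 0) (b := 1/2)
        (r := p - 1) (by linarith)).const_mul M
      rw [intervalIntegrable_iff_integrableOn_Ioo_of_le (by norm_num)] at this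
      exact this
    refine Integrable.mono' hg (hmeas.mono_set (Ioo_subset_Ioo le_rfl (by norm_num))) ?_
    filter_upwards [ae_restrict_mem measurableSet_Ioo] with x hx
    rw [Real.norm_eq_abs, abs_mul, abs_of_nonneg (Real.rpow_nonneg hx.1.le _),
      abs_of_nonneg (Real.rpow_nonneg (by linarith [hx.2] : (0:ℝ) ≤ 1 - x) _), mul_comm M]
    refine mul_le_mul_of_nonneg_left ?_ (Real.rpow_nonneg hx.1.le _)
    exact rpow_bound (by norm_num) (1 - x) (by linarith [hx.2]) (by linarith [hx.1])
  have h2 : IntegrableOn (fun x : ℝ => x ^ (p - 1) * (1 - x) ^ (q - 1)) (Ico (1/2) (1:ℝ)) := by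
    rw [integrableOn_Ico_iff_integrableOn_Ioo]
    set M := max (((1:ℝ)/2) ^ (p - 1)) ((1:ℝ) ^ (p - 1)) with hM
    have hg : IntegrableOn (fun x : ℝ => M * (1 - x) ^ (q - 1)) (Ioo (1/2) (1:ℝ)) := by
      have h0 : IntervalIntegrable (fun x : ℝ => x ^ (q - 1)) volume 0 (1/2) :=
        intervalIntegral.intervalIntegrable_rpow' (by linarith)
      have h1 := ((h0.comp_sub_left 1).symm.const_mul M)
      norm_num at h1
      rwa [intervalIntegrable_iff_integrableOn_Ioo_of_le (by norm_num)] at h1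
    refine Integrable.mono' hg (hmeas.mono_set (Ioo_subset_Ioo (by norm_num) le_rfl)) ?_
    filter_upwards [ae_restrict_mem measurableSet_Ioo] with x hx
    rw [Real.norm_eq_abs, abs_mul, abs_of_nonneg (Real.rpow_nonneg (by linarith [hx.1] : (0:ℝ) ≤ x) _),
      abs_of_nonneg (Real.rpow_nonneg (by linarith [hx.2] : (0:ℝ) ≤ 1 - x) _)]
    refine mul_le_mul_of_nonneg_right ?_ (Real.rpow_nonneg (by linarith [hx.2]) _)
    exact rpow_bound (by norm_num) x hx.1.le hx.2.le
  have : Ioo (0:ℝ) 1 = Ioo 0 (1/2) ∪ Ico (1/2) 1 := by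
    rw [Ioo_union_Ico_eq_Ioo (by norm_num) (by norm_num)]
  rw [this]
  exact h1.union h2

theorem beta_value {p q : ℝ} (hp : 0 < p) (hq : 0 < q) :
    ∫ x in Ioo (0:ℝ) 1, x ^ (p - 1) * (1 - x) ^ (q - 1) =
      Real.Gamma p * Real.Gamma q / Real.Gamma (p + q) := by
  have h1 : Complex.betaIntegral p q = Complex.Gamma p * Complex.Gamma q / Complex.Gamma (p + q) := by
    have h := Complex.Gamma_mul_Gamma_eq_betaIntegral (s := p) (t := q)
      (by simpa using hp) (by simpa using hq)
    have hne : Complex.Gamma (p + q) ≠ 0 := by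
      rw [show ((p:ℂ) + q) = ((p + q : ℝ) : ℂ) by push_cast; ring, Complex.Gamma_ofReal]
      exact_mod_cast (Real.Gamma_pos_of_pos (by linarith)).ne'
    rw [h]
    field_simp
  have h2 : Complex.betaIntegral p q =
      ((∫ x in Ioo (0:ℝ) 1, x ^ (p - 1) * (1 - x) ^ (q - 1) : ℝ) : ℂ) := by
    rw [Complex.betaIntegral]
    rw [show (∫ x in Ioo (0:ℝ) 1, x ^ (p - 1) * (1 - x) ^ (q - 1)) =
      ∫ x in (0:ℝ)..1, x ^ (p - 1) * (1 - x) ^ (q - 1) by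
        rw [intervalIntegral.integral_of_le (by norm_num), integral_Ioc_eq_integral_Ioo]]
    rw [← intervalIntegral.integral_ofReal]
    apply intervalIntegral.integral_congr
    intro x hx
    rw [uIcc_of_le (by norm_num)] at hx
    simp only []
    rw [Complex.ofReal_mul, Complex.ofReal_cpow hx.1 (p-1),
      Complex.ofReal_cpow (by linarith [hx.2] : (0:ℝ) ≤ 1 - x) (q-1)]
    push_cast
    ring_nf
  rw [h2] at h1
  have : ((∫ x in Ioo (0:ℝ) 1, x ^ (p - 1) * (1 - x) ^ (q - 1) : ℝ) : ℂ) =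
      ((Real.Gamma p * Real.Gamma q / Real.Gamma (p + q) : ℝ) : ℂ) := by
    rw [h1]; push_cast [← Complex.Gamma_ofReal]; ring_nf
  exact_mod_cast this

lemma mvt_bound {ν : ℝ} : ∃ C : ℝ, 0 ≤ C ∧ ∀ x ∈ Icc (0:ℝ) (1/2), |(1 - x) ^ ν - 1| ≤ C * x := by
  refine ⟨|ν| * max (((1:ℝ)/2) ^ (ν - 1)) ((1:ℝ) ^ (ν - 1)),
    mul_nonneg (abs_nonneg _) (le_trans (Real.rpow_nonneg (by norm_num) _) (le_max_left _ _)), ?_⟩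
  intro x hx
  have hderiv : ∀ y ∈ Icc (0:ℝ) (1/2), HasDerivWithinAt (fun x : ℝ => (1 - x) ^ ν)
      ((0 - 1) * ν * (1 - y) ^ (ν - 1)) (Icc (0:ℝ) (1/2)) y := by
    intro y hy
    refine (((hasDerivAt_const y (1:ℝ)).sub (hasDerivAt_id' (x := y))).rpow_const ?_).hasDerivWithinAt
    left
    have : (0:ℝ) < 1 - y := by linarith [hy.2]
    simpa using this.ne'
  have hbound : ∀ y ∈ Icc (0:ℝ) (1/2),
      ‖(0 - 1) * ν * (1 - y) ^ (ν - 1)‖ ≤ |ν| * max (((1:ℝ)/2) ^ (ν - 1)) ((1:ℝ) ^ (ν - 1)) := by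
    intro y hy
    rw [Real.norm_eq_abs]
    have habs : |(0 - 1) * ν * (1 - y) ^ (ν - 1)| = |ν| * |(1 - y) ^ (ν - 1)| := by
      rw [abs_mul, abs_mul]; norm_num
    rw [habs, abs_of_nonneg (Real.rpow_nonneg (by linarith [hy.2] : (0:ℝ) ≤ 1 - y) _)]
    refine mul_le_mul_of_nonneg_left ?_ (abs_nonneg _)
    exact rpow_bound (by norm_num) (1 - y) (by linarith [hy.2]) (by linarith [hy.1])
  have h := Convex.norm_image_sub_le_of_norm_hasDerivWithin_le hderiv hbound (convex_Icc _ _)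
    (left_mem_Icc.mpr (by norm_num)) hx
  rw [Real.norm_eq_abs, Real.norm_eq_abs] at h
  simpa [Real.one_rpow, abs_of_nonneg hx.1] using h

lemma main_integrable {α ν : ℝ} (hα₁ : 0 < α) (hα₂ : α < 1) (hν : -1 < ν) :
    IntegrableOn (fun u : ℝ => ((1 - u) ^ ν - 1) / u ^ (1 + α)) (Ioo (0:ℝ) 1) := by
  have hmeas : AEStronglyMeasurable (fun u : ℝ => ((1 - u) ^ ν - 1) / u ^ (1 + α))
      (volume.restrict (Ioo (0:ℝ) 1)) := by
    apply ContinuousOn.aestronglyMeasurable _ measurableSet_Ioo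
    intro x hx
    apply ContinuousWithinAt.div
    · refine (((Real.continuousAt_rpow_const (1-x) ν (Or.inl ?_)).comp
        (by fun_prop)).sub continuousAt_const).continuousWithinAt
      have : (0:ℝ) < 1 - x := by linarith [hx.2]
      exact this.ne'
    · exact (Real.continuousAt_rpow_const x (1+α) (Or.inl hx.1.ne')).continuousWithinAt
    · exact (Real.rpow_pos_of_pos hx.1 _).ne'
  obtain ⟨C, hCnn, hmvt⟩ := mvt_bound (ν := ν)
  have h1 : IntegrableOn (fun u : ℝ => ((1 - u) ^ ν - 1) / u ^ (1 + α)) (Ioo (0:ℝ) (1/2)) := by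
    have hg : IntegrableOn (fun x : ℝ => C * x ^ (-α)) (Ioo (0:ℝ) (1/2)) := by
      have := (intervalIntegral.intervalIntegrable_rpow' (a := 0) (b := 1/2)
        (r := -α) (by linarith)).const_mul C
      rwa [intervalIntegrable_iff_integrableOn_Ioo_of_le (by norm_num)] at this
    refine Integrable.mono' hg (hmeas.mono_set (Ioo_subset_Ioo le_rfl (by norm_num))) ?_
    filter_upwards [ae_restrict_mem measurableSet_Ioo] with x hx
    have hxx : x ^ (-α) * x ^ (1 + α) = x := by
      rw [← Real.rpow_add hx.1]; norm_num
    rw [Real.norm_eq_abs, abs_div, abs_of_pos (Real.rpow_pos_of_pos hx.1 _),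
      div_le_iff₀ (Real.rpow_pos_of_pos hx.1 _)]
    calc |(1 - x) ^ ν - 1| ≤ C * x := hmvt x ⟨hx.1.le, hx.2.le⟩
      _ = C * x ^ (-α) * x ^ (1 + α) := by rw [mul_assoc, hxx]
  have h2 : IntegrableOn (fun u : ℝ => ((1 - u) ^ ν - 1) / u ^ (1 + α)) (Ico (1/2) (1:ℝ)) := by
    rw [integrableOn_Ico_iff_integrableOn_Ioo]
    set M := max (((1:ℝ)/2) ^ (-(1+α))) ((1:ℝ) ^ (-(1+α)))
    have hMnn : 0 ≤ M := le_trans (Real.rpow_nonneg (by norm_num) _) (le_max_left _ _)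
    have hg : IntegrableOn (fun x : ℝ => ((1 - x) ^ ν + 1) * M) (Ioo (1/2) (1:ℝ)) := by
      have h0 : IntervalIntegrable (fun x : ℝ => x ^ ν + 1) volume 0 (1/2) :=
        (intervalIntegral.intervalIntegrable_rpow' hν).add (intervalIntegrable_const)
      have h1 := ((h0.comp_sub_left 1).symm.mul_const M)
      norm_num at h1
      rwa [intervalIntegrable_iff_integrableOn_Ioo_of_le (by norm_num)] at h1
    refine Integrable.mono' hg (hmeas.mono_set (Ioo_subset_Ioo (by norm_num) le_rfl)) ?_
    filter_upwards [ae_restrict_mem measurableSet_Ioo] with x hx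
    have hx0 : (0:ℝ) < x := by linarith [hx.1]
    have h1x : (0:ℝ) ≤ 1 - x := by linarith [hx.2]
    rw [Real.norm_eq_abs, abs_div, abs_of_pos (Real.rpow_pos_of_pos hx0 _), div_eq_mul_inv,
      ← Real.rpow_neg hx0.le]
    refine mul_le_mul ?_ ?_ (Real.rpow_nonneg hx0.le _) (by positivity)
    · calc |(1 - x) ^ ν - 1| ≤ |(1-x)^ν| + |1| := abs_sub _ _
        _ = (1 - x) ^ ν + 1 := by rw [abs_one, abs_of_nonneg (Real.rpow_nonneg h1x _)]
    · exact rpow_bound (by norm_num) x (by linarith [hx.1]) hx.2.le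
  have : Ioo (0:ℝ) 1 = Ioo 0 (1/2) ∪ Ico (1/2) 1 := by
    rw [Ioo_union_Ico_eq_Ioo (by norm_num) (by norm_num)]
  rw [this]
  exact h1.union h2

theorem key {α ν : ℝ} (hα₁ : 0 < α) (hα₂ : α < 1) (hν : 0 < ν) :
    ∫ u in Ioo (0 : ℝ) 1, ((1 - u) ^ ν - 1) / u ^ (1 + α) =
      (1 / α) * (1 - Real.Gamma (1 + ν) * Real.Gamma (1 - α) / Real.Gamma (1 - α + ν)) := by
  set f : ℝ → ℝ := fun x => (1 - x) ^ ν - 1 with hf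
  set g : ℝ → ℝ := fun x => (1 - x ^ (-α)) / α with hg
  set f' : ℝ → ℝ := fun x => (0 - 1) * ν * (1 - x) ^ (ν - 1) with hf'
  set g' : ℝ → ℝ := fun x => (0 - -α * x ^ (-α - 1)) / α with hg'
  -- derivatives
  have hd : ∀ x ∈ Ioo (0:ℝ) 1, HasDerivAt (fun x => f x * g x) (f' x * g x + f x * g' x) x := by
    intro x hx
    have h1x : (0:ℝ) < 1 - x := by linarith [hx.2]
    have hdf : HasDerivAt f (f' x) x := by
      exact (((hasDerivAt_const x (1:ℝ)).sub (hasDerivAt_id' (x := x))).rpow_const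
        (Or.inl h1x.ne')).sub_const 1
    have hdg : HasDerivAt g (g' x) x := by
      exact (((hasDerivAt_const x (1:ℝ)).sub
        (Real.hasDerivAt_rpow_const (p := -α) (Or.inl hx.1.ne'))).div_const α)
    exact hdf.mul hdg
  -- g' equals x ^ (-α-1)
  have hg'eq : ∀ x : ℝ, g' x = x ^ (-α - 1) := by
    intro x
    simp only [hg']
    field_simp
    ring
  -- integrand fg' matches main integrand a.e.
  have hfg' : ∀ x ∈ Ioo (0:ℝ) 1, f x * g' x = ((1 - x) ^ ν - 1) / x ^ (1 + α) := by
    intro x hx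
    rw [hg'eq, div_eq_mul_inv, ← Real.rpow_neg hx.1.le]
    simp only [hf]
    ring_nf
  have hint_fg' : IntegrableOn (fun x => f x * g' x) (Ioo (0:ℝ) 1) := by
    refine (main_integrable hα₁ hα₂ (by linarith)).congr_fun ?_ measurableSet_Ioo
    intro x hx; exact (hfg' x hx).symm
  -- f'g in beta form
  have hf'g : ∀ x ∈ Ioo (0:ℝ) 1, f' x * g x =
      (ν / α) * (x ^ ((1 - α) - 1) * (1 - x) ^ (ν - 1)) - (ν / α) * (x ^ ((1:ℝ) - 1) * (1 - x) ^ (ν - 1)) := by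
    intro x hx
    have : x ^ ((1 - α) - 1) = x ^ (-α) := by norm_num
    rw [this]
    have h0 : x ^ ((1:ℝ) - 1) = 1 := by norm_num
    rw [h0]
    simp only [hf', hg]
    field_simp
    ring
  have hint_b1 : IntegrableOn (fun x : ℝ => x ^ ((1 - α) - 1) * (1 - x) ^ (ν - 1)) (Ioo (0:ℝ) 1) :=
    integrableOn_beta (by linarith) hν
  have hint_b2 : IntegrableOn (fun x : ℝ => x ^ ((1:ℝ) - 1) * (1 - x) ^ (ν - 1)) (Ioo (0:ℝ) 1) :=
    integrableOn_beta (by norm_num) hν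
  have hint_f'g : IntegrableOn (fun x => f' x * g x) (Ioo (0:ℝ) 1) := by
    have hsub : IntegrableOn (fun x : ℝ => (ν/α) * (x ^ ((1 - α) - 1) * (1 - x) ^ (ν - 1)) -
        (ν/α) * (x ^ ((1:ℝ) - 1) * (1 - x) ^ (ν - 1))) (Ioo (0:ℝ) 1) :=
      (hint_b1.const_mul _).sub (hint_b2.const_mul _)
    exact hsub.congr_fun (fun x hx => (hf'g x hx).symm) measurableSet_Ioo
  -- limits
  have hA : Tendsto (fun x => f x * g x) (𝓝[>] (0:ℝ)) (𝓝 0) := by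
    have heq : ∀ᶠ x in 𝓝[>] (0:ℝ), f x * g x = (f x / x) * ((x - x ^ (1 - α)) / α) := by
      filter_upwards [self_mem_nhdsWithin] with x (hx : 0 < x)
      have hxx : x ^ (1 - α) = x * x ^ (-α) := by
        rw [show (1:ℝ) - α = 1 + (-α) by ring, Real.rpow_add hx, Real.rpow_one]
      rw [hxx]
      simp only [hf, hg]
      field_simp
    rw [tendsto_congr' heq]
    have h1 : Tendsto (fun x => f x / x) (𝓝[>] (0:ℝ)) (𝓝 (-ν)) := by
      have hder : HasDerivAt f ((0 - 1) * ν * (1 - (0:ℝ)) ^ (ν - 1)) 0 :=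
        (((hasDerivAt_const (0:ℝ) (1:ℝ)).sub (hasDerivAt_id' (x := 0))).rpow_const
          (Or.inl (by norm_num))).sub_const 1
      have := hasDerivAt_iff_tendsto_slope.mp hder
      have h2 := this.mono_left (nhdsWithin_mono 0 (fun x hx => (ne_of_gt hx : x ≠ 0)))
      have h3 : (0 - 1) * ν * (1 - (0:ℝ)) ^ (ν - 1) = -ν := by
        norm_num
      rw [h3] at h2
      refine h2.congr' ?_
      filter_upwards [self_mem_nhdsWithin] with x (hx : 0 < x)
      rw [slope_def_field]
      simp [hf, Real.one_rpow]
    have h2 : Tendsto (fun x : ℝ => (x - x ^ (1 - α)) / α) (𝓝[>] (0:ℝ)) (𝓝 0) := by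
      have hc : ContinuousAt (fun x : ℝ => (x - x ^ (1 - α)) / α) 0 := by
        apply ContinuousAt.div_const
        apply ContinuousAt.sub continuousAt_id
        exact Real.continuousAt_rpow_const 0 (1 - α) (Or.inr (by linarith))
      have h4 : Tendsto (fun x : ℝ => (x - x ^ (1 - α)) / α) (𝓝[>] (0:ℝ))
          (𝓝 ((0 - (0:ℝ) ^ (1 - α)) / α)) := hc.tendsto.mono_left nhdsWithin_le_nhds
      simpa [Real.zero_rpow (by linarith : (1:ℝ) - α ≠ 0)] using h4
    simpa using h1.mul h2
  have hB : Tendsto (fun x => f x * g x) (𝓝[<] (1:ℝ)) (𝓝 0) := by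
    have hc : ContinuousAt (fun x => f x * g x) 1 := by
      apply ContinuousAt.mul
      · apply ContinuousAt.sub _ continuousAt_const
        have h1 : ContinuousAt (fun x : ℝ => 1 - x) 1 := continuousAt_const.sub continuousAt_id
        have h2 : ContinuousAt (fun t : ℝ => t ^ ν) ((fun x : ℝ => 1 - x) 1) := by
          norm_num
          exact Real.continuousAt_rpow_const 0 ν (Or.inr hν.le)
        exact h2.comp h1
      · apply ContinuousAt.div_const
        apply ContinuousAt.sub continuousAt_const
        exact Real.continuousAt_rpow_const 1 (-α) (Or.inl one_ne_zero)
    have h5 : Tendsto (fun x => f x * g x) (𝓝[<] (1:ℝ)) (𝓝 (f 1 * g 1)) :=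
      hc.tendsto.mono_left nhdsWithin_le_nhds
    simpa [hf, hg, Real.zero_rpow hν.ne', Real.one_rpow] using h5
  -- FTC
  have hftc := ftc_Ioo (fun x => f x * g x) (fun x => f' x * g x + f x * g' x) (by norm_num)
    hd (hint_f'g.add hint_fg') hA hB
  rw [integral_add hint_f'g hint_fg'] at hftc
  -- compute ∫ f'g
  have hval : ∫ x in Ioo (0:ℝ) 1, f' x * g x =
      (ν / α) * (Real.Gamma (1-α) * Real.Gamma ν / Real.Gamma (1 - α + ν)) - (ν / α) * (1 / ν) := by
    rw [setIntegral_congr_fun measurableSet_Ioo (fun x hx => hf'g x hx)]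
    rw [integral_sub (hint_b1.const_mul _) (hint_b2.const_mul _), integral_const_mul, integral_const_mul,
      beta_value (by linarith) hν, beta_value (by norm_num) hν]
    have hΓν : Real.Gamma ν ≠ 0 := (Real.Gamma_pos_of_pos hν).ne'
    have hbv2 : Real.Gamma 1 * Real.Gamma ν / Real.Gamma (1 + ν) = 1 / ν := by
      rw [Real.Gamma_one, one_mul, show (1:ℝ) + ν = ν + 1 by ring, Real.Gamma_add_one hν.ne',
        mul_comm ν (Real.Gamma ν), ← div_div, div_self hΓν]
    rw [hbv2]
  have htarget : ∫ x in Ioo (0:ℝ) 1, f x * g' x =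
      ∫ u in Ioo (0 : ℝ) 1, ((1 - u) ^ ν - 1) / u ^ (1 + α) :=
    setIntegral_congr_fun measurableSet_Ioo (fun x hx => hfg' x hx)
  rw [hval, htarget] at hftc
  have hGν : Real.Gamma (1 + ν) = ν * Real.Gamma ν := by
    rw [show (1:ℝ) + ν = ν + 1 by ring, Real.Gamma_add_one hν.ne']
  rw [hGν]
  have hαne : α ≠ 0 := hα₁.ne'
  have hνne : ν ≠ 0 := hν.ne'
  have e1 : ν / α * (1 / ν) = 1 / α := by field_simp
  have e2 : (1/α) * (1 - ν * Real.Gamma ν * Real.Gamma (1-α) / Real.Gamma (1-α+ν)) =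
      1/α - ν/α * (Real.Gamma (1-α) * Real.Gamma ν / Real.Gamma (1-α+ν)) := by ring
  rw [e2]
  linarith [hftc]

theorem stmt_1 (α ν : ℝ) (hα₁ : 0 < α) (hα₂ : α < 1) (hν : -1 < ν) :
    ∫ u in Ioo (0 : ℝ) 1, ((1 - u) ^ ν - 1) / u ^ (1 + α) =
      (1 / α) * (1 - Real.Gamma (1 + ν) * Real.Gamma (1 - α) / Real.Gamma (1 - α + ν)) := by
  rcases lt_or_ge 0 ν with hν0 | hν0
  · exact key hα₁ hα₂ hν0
  -- reduction: ν + 1 > 0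
  have hν1 : 0 < ν + 1 := by linarith
  have hsplit : ∀ u ∈ Ioo (0:ℝ) 1, ((1 - u) ^ ν - 1) / u ^ (1 + α) =
      ((1 - u) ^ (ν + 1) - 1) / u ^ (1 + α) + u ^ ((1 - α) - 1) * (1 - u) ^ ((ν + 1) - 1) := by
    intro u hu
    have hu0 : (0:ℝ) < u := hu.1
    have h1u : (0:ℝ) < 1 - u := by linarith [hu.2]
    have e1 : (1 - u) ^ (ν + 1) = (1 - u) ^ ν * (1 - u) := by
      rw [Real.rpow_add h1u, Real.rpow_one]
    have e2 : u ^ ((1 - α) - 1) = u ^ (-α) := by norm_num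
    have e3 : (1 - u) ^ ((ν + 1) - 1) = (1 - u) ^ ν := by norm_num
    have e5 : u ^ (-α) = u / u ^ (1 + α) := by
      rw [Real.rpow_add hu0, Real.rpow_one, Real.rpow_neg hu0.le]
      field_simp [hu0.ne', (Real.rpow_pos_of_pos hu0 α).ne']
    have hD : u ^ (1 + α) ≠ 0 := (Real.rpow_pos_of_pos hu0 _).ne'
    rw [e1, e2, e3, e5]
    field_simp
    ring
  rw [setIntegral_congr_fun measurableSet_Ioo hsplit]
  rw [integral_add (main_integrable hα₁ hα₂ (by linarith)) (integrableOn_beta (by linarith) hν1)]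
  rw [key hα₁ hα₂ hν1, beta_value (p := 1 - α) (q := ν + 1) (by linarith) hν1]
  have hG1 : Real.Gamma (1 + (ν + 1)) = (1 + ν) * Real.Gamma (1 + ν) := by
    rw [show (1:ℝ) + (ν + 1) = (1 + ν) + 1 by ring, Real.Gamma_add_one (by linarith)]
  rcases eq_or_ne (1 - α + ν) 0 with hs | hs
  · have h1ν : (1:ℝ) + ν = α := by linarith
    have hG2 : Real.Gamma (1 - α + (ν + 1)) = 1 := by
      rw [show (1:ℝ) - α + (ν + 1) = (1 - α + ν) + 1 by ring, hs, zero_add, Real.Gamma_one]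
    rw [hG1, hG2, hs, Real.Gamma_zero, div_zero, sub_zero, h1ν,
      show ν + 1 = α by linarith]
    field_simp
    ring
  · have hs1 : (-1:ℝ) < 1 - α + ν := by linarith
    have hG3ne : Real.Gamma (1 - α + ν) ≠ 0 := by
      apply Real.Gamma_ne_zero
      intro m
      match m with
      | 0 => simpa using hs
      | (n+1) => push_cast; intro h; linarith [h]
    have hG2 : Real.Gamma (1 - α + (ν + 1)) = (1 - α + ν) * Real.Gamma (1 - α + ν) := by
      rw [show (1:ℝ) - α + (ν + 1) = (1 - α + ν) + 1 by ring, Real.Gamma_add_one hs]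
    rw [hG1, hG2]
    have hαne : α ≠ 0 := hα₁.ne'
    field_simp
    ring
end

section
/- For α > 0, the integral ∫₁^∞ log(1+u) / u^{1+α} du equals (1/α)(ψ(α) - ψ(α/2)), where ψ is the digamma function. -/
open Real MeasureTheory Set

/-- The digamma function `ψ(z) = Γ'(z) / Γ(z)`. -/
noncomputable def digamma (x : ℝ) : ℝ := deriv Real.Gamma x / Real.Gamma x

open Filter Topology

lemma hasDerivAt_Gamma' {x : ℝ} (hx : 0 < x) :
    HasDerivAt Real.Gamma (digamma x * Real.Gamma x) x := by
  have hd : DifferentiableAt ℝ Real.Gamma x := by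
    refine Real.differentiableAt_Gamma fun m => ?_
    have : (0:ℝ) ≤ m := Nat.cast_nonneg m
    intro h; rw [h] at hx; linarith
  have := hd.hasDerivAt
  refine this.congr_deriv (Eq.symm ?_)
  rw [digamma, div_mul_cancel₀ _ (Real.Gamma_pos_of_pos hx).ne']

lemma hasDerivAt_logGamma {x : ℝ} (hx : 0 < x) :
    HasDerivAt (fun t => Real.log (Real.Gamma t)) (digamma x) x := by
  have h := (Real.hasDerivAt_log (Real.Gamma_pos_of_pos hx).ne').comp x (hasDerivAt_Gamma' hx)
  refine h.congr_deriv (Eq.symm ?_)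
  rw [mul_comm, mul_assoc, mul_inv_cancel₀ (Real.Gamma_pos_of_pos hx).ne', mul_one]

lemma digamma_add_one {x : ℝ} (hx : 0 < x) : digamma (x + 1) = digamma x + 1 / x := by
  have h1 : HasDerivAt (fun t => Real.Gamma (t + 1))
      (digamma (x+1) * Real.Gamma (x+1)) x := by
    have := (hasDerivAt_Gamma' (by linarith : (0:ℝ) < x + 1)).comp x
      ((hasDerivAt_id x).add_const 1)
    simpa [Function.comp_def] using this
  have h2 : HasDerivAt (fun t => t * Real.Gamma t)
      (1 * Real.Gamma x + x * (digamma x * Real.Gamma x)) x :=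
    (hasDerivAt_id x).mul (hasDerivAt_Gamma' hx)
  have heq : (fun t => Real.Gamma (t + 1)) =ᶠ[nhds x] (fun t => t * Real.Gamma t) := by
    filter_upwards [eventually_gt_nhds hx] with t ht
    exact Real.Gamma_add_one ht.ne'
  have h1' : HasDerivAt (fun t => t * Real.Gamma t)
      (digamma (x+1) * Real.Gamma (x+1)) x := h1.congr_of_eventuallyEq heq.symm
  have hu := h1'.unique h2
  have hΓ : Real.Gamma (x+1) = x * Real.Gamma x := Real.Gamma_add_one hx.ne'
  rw [hΓ] at hu
  have hΓx := (Real.Gamma_pos_of_pos hx).ne'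
  field_simp at hu ⊢
  linear_combination hu

lemma digamma_le_log {t : ℝ} (ht : 0 < t) : digamma t ≤ Real.log t := by
  have hc := Real.convexOn_log_Gamma
  have h := hc.le_slope_of_hasDerivAt (mem_Ioi.mpr ht) (mem_Ioi.mpr (by linarith : (0:ℝ) < t + 1))
    (by linarith) (hasDerivAt_logGamma ht)
  rw [slope_def_field] at h
  have : (Real.log ∘ Real.Gamma) (t+1) - (Real.log ∘ Real.Gamma) t = Real.log t := by
    simp only [Function.comp_apply, Real.Gamma_add_one ht.ne',
      Real.log_mul ht.ne' (Real.Gamma_pos_of_pos ht).ne']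
    ring
  calc digamma t ≤ ((Real.log ∘ Real.Gamma) (t+1) - (Real.log ∘ Real.Gamma) t) / (t + 1 - t) := h
    _ = Real.log t := by rw [this]; simp

lemma log_le_digamma {t : ℝ} (ht : 1 < t) : Real.log (t - 1) ≤ digamma t := by
  have hc := Real.convexOn_log_Gamma
  have h := hc.slope_le_of_hasDerivAt (mem_Ioi.mpr (by linarith : (0:ℝ) < t - 1))
    (mem_Ioi.mpr (by linarith : (0:ℝ) < t)) (by linarith) (hasDerivAt_logGamma (by linarith))
  rw [slope_def_field] at h
  have ht1 : (0:ℝ) < t - 1 := by linarith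
  have : (Real.log ∘ Real.Gamma) t - (Real.log ∘ Real.Gamma) (t-1) = Real.log (t-1) := by
    have hΓ : Real.Gamma t = (t - 1) * Real.Gamma (t - 1) := by
      have := Real.Gamma_add_one ht1.ne'
      simpa using this
    simp only [Function.comp_apply, hΓ,
      Real.log_mul ht1.ne' (Real.Gamma_pos_of_pos ht1).ne']
    ring
  calc Real.log (t - 1) = ((Real.log ∘ Real.Gamma) t - (Real.log ∘ Real.Gamma) (t-1)) / (t - (t-1)) := by
        rw [this]; simp
    _ ≤ digamma t := h

lemma sum_digamma {z : ℝ} (hz : 0 < z) (n : ℕ) :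
    ∑ k ∈ Finset.range n, 1 / (z + k) = digamma (z + n) - digamma z := by
  induction n with
  | zero => simp
  | succ n ih =>
    rw [Finset.sum_range_succ, ih]
    have h : digamma (z + n + 1) = digamma (z + n) + 1 / (z + n) :=
      digamma_add_one (by positivity)
    push_cast
    rw [show z + ((n:ℝ) + 1) = z + n + 1 by ring, h]
    ring

lemma tendsto_log_sub_log (a b : ℝ) :
    Tendsto (fun n : ℕ => Real.log (a + n) - Real.log (b + n)) atTop (𝓝 0) := by
  have hb : Tendsto (fun n : ℕ => b + (n:ℝ)) atTop atTop :=
    tendsto_atTop_add_const_left _ b (tendsto_natCast_atTop_atTop)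
  have hr : Tendsto (fun n : ℕ => (a + n) / (b + n)) atTop (𝓝 1) := by
    have h1 : Tendsto (fun n : ℕ => 1 + (a - b) / (b + n)) atTop (𝓝 (1 + 0)) :=
      tendsto_const_nhds.add (tendsto_const_nhds.div_atTop hb)
    rw [add_zero] at h1
    refine h1.congr' ?_
    filter_upwards [hb.eventually_gt_atTop 0] with n hn
    field_simp
    ring
  have hlog : Tendsto (fun n : ℕ => Real.log ((a + n) / (b + n))) atTop (𝓝 0) := by
    have := (Real.continuousAt_log one_ne_zero).tendsto.comp hr
    simpa [Function.comp_def] using this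
  refine hlog.congr' ?_
  filter_upwards [hb.eventually_gt_atTop 0,
    (tendsto_atTop_add_const_left _ a (tendsto_natCast_atTop_atTop (R := ℝ))).eventually_gt_atTop 0]
    with n hbn han
  exact Real.log_div han.ne' hbn.ne'

lemma digamma_hasSum {x y : ℝ} (hx : 0 < x) (hy : 0 < y) :
    HasSum (fun k : ℕ => 1 / (x + k) - 1 / (y + k)) (digamma y - digamma x) := by
  set f : ℕ → ℝ := fun k => 1 / (x + k) - 1 / (y + k) with hf
  -- summability
  have hsum : Summable f := by
    set c : ℝ := min (min x y) 1 with hc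
    have hc0 : 0 < c := by positivity
    have hbound : ∀ k : ℕ, |f k| ≤ (|y - x| / c ^ 2) * (1 / ((k:ℝ) + 1) ^ 2) := by
      intro k
      have hxk : (0:ℝ) < x + k := by positivity
      have hyk : (0:ℝ) < y + k := by positivity
      have hfk : f k = (y - x) / ((x + k) * (y + k)) := by
        simp only [hf]
        rw [div_sub_div _ _ hxk.ne' hyk.ne']
        ring
      have hck : c * ((k:ℝ) + 1) ≤ x + k := by
        have h1 : c ≤ x := le_trans (min_le_left _ _) (min_le_left _ _)
        have h2 : c ≤ 1 := min_le_right _ _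
        nlinarith [Nat.cast_nonneg (α := ℝ) k]
      have hck' : c * ((k:ℝ) + 1) ≤ y + k := by
        have h1 : c ≤ y := le_trans (min_le_left _ _) (min_le_right _ _)
        have h2 : c ≤ 1 := min_le_right _ _
        nlinarith [Nat.cast_nonneg (α := ℝ) k]
      have hD : c ^ 2 * ((k:ℝ) + 1) ^ 2 ≤ (x + k) * (y + k) := by
        nlinarith [mul_le_mul hck hck' (by positivity : (0:ℝ) ≤ c * ((k:ℝ)+1)) hxk.le]
      rw [hfk, abs_div, abs_of_pos (by positivity : (0:ℝ) < (x+k)*(y+k)),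
        div_mul_div_comm, mul_one]
      exact div_le_div_of_nonneg_left (abs_nonneg _) (by positivity) hD
    have hbase : Summable (fun k : ℕ => (|y - x| / c ^ 2) * (1 / ((k:ℝ) + 1) ^ 2)) := by
      apply Summable.mul_left
      have := summable_one_div_nat_pow.mpr (by norm_num : 1 < 2)
      have h2 := (summable_nat_add_iff 1).mpr this
      refine h2.congr fun k => ?_
      push_cast
      ring
    exact (hbase.of_nonneg_of_le (fun k => abs_nonneg _) hbound).of_abs
  -- limit of partial sums
  have hpartial : Tendsto (fun n : ℕ => ∑ k ∈ Finset.range n, f k) atTop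
      (𝓝 (digamma y - digamma x)) := by
    have heq : ∀ n : ℕ, ∑ k ∈ Finset.range n, f k
        = (digamma y - digamma x) + (digamma (x + n) - digamma (y + n)) := by
      intro n
      rw [hf]
      rw [Finset.sum_sub_distrib, sum_digamma hx, sum_digamma hy]
      ring
    have hzero : Tendsto (fun n : ℕ => digamma (x + n) - digamma (y + n)) atTop (𝓝 0) := by
      have hxn : Tendsto (fun n : ℕ => x + (n:ℝ)) atTop atTop :=
        tendsto_atTop_add_const_left _ x (tendsto_natCast_atTop_atTop)
      have hyn : Tendsto (fun n : ℕ => y + (n:ℝ)) atTop atTop :=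
        tendsto_atTop_add_const_left _ y (tendsto_natCast_atTop_atTop)
      refine tendsto_of_tendsto_of_tendsto_of_le_of_le'
        (g := fun n : ℕ => Real.log (x - 1 + n) - Real.log (y + n))
        (h := fun n : ℕ => Real.log (x + n) - Real.log (y - 1 + n))
        (tendsto_log_sub_log _ _) (tendsto_log_sub_log _ _) ?_ ?_
      · filter_upwards [hxn.eventually_gt_atTop 1, hyn.eventually_gt_atTop 1] with n h1 h2
        have l1 : Real.log (x + n - 1) ≤ digamma (x + n) := log_le_digamma h1
        have l2 : digamma (y + n) ≤ Real.log (y + n) := digamma_le_log (by linarith)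
        have : x - 1 + n = x + n - 1 := by ring
        rw [this]
        linarith
      · filter_upwards [hxn.eventually_gt_atTop 1, hyn.eventually_gt_atTop 1] with n h1 h2
        have l1 : digamma (x + n) ≤ Real.log (x + n) := digamma_le_log (by linarith)
        have l2 : Real.log (y + n - 1) ≤ digamma (y + n) := log_le_digamma h2
        have : y - 1 + n = y + n - 1 := by ring
        rw [this]
        linarith
    have := tendsto_const_nhds.add hzero (f := fun _ : ℕ => digamma y - digamma x) (x := atTop)
    rw [add_zero] at this
    exact this.congr fun n => (heq n).symm
  have h1 := hsum.hasSum
  have h2 := h1.tendsto_sum_nat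
  have : ∑' k, f k = digamma y - digamma x := tendsto_nhds_unique h2 hpartial
  rwa [this] at h1

lemma digamma_dup {s : ℝ} (hs : 0 < s) :
    digamma s + digamma (s + 1/2) = 2 * digamma (2*s) - 2 * Real.log 2 := by
  have hs2 : 0 < s + 1/2 := by linarith
  have h2s : 0 < 2 * s := by linarith
  have hA := Real.Gamma_pos_of_pos hs
  have hB := Real.Gamma_pos_of_pos hs2
  have hC := Real.Gamma_pos_of_pos h2s
  have hP : (0:ℝ) < (2:ℝ) ^ (1 - 2*s) := Real.rpow_pos_of_pos two_pos _
  -- derivative of LHS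
  have hF : HasDerivAt (fun t => Real.Gamma t * Real.Gamma (t + 1/2))
      ((digamma s * Real.Gamma s) * Real.Gamma (s + 1/2)
        + Real.Gamma s * (digamma (s + 1/2) * Real.Gamma (s + 1/2) * 1)) s := by
    exact (hasDerivAt_Gamma' hs).mul
      (by
        have := (hasDerivAt_Gamma' hs2).comp s ((hasDerivAt_id s).add_const (1/2))
        simpa [Function.comp_def] using this)
  -- derivative of RHS
  have hG1 : HasDerivAt (fun t => Real.Gamma (2 * t))
      (digamma (2*s) * Real.Gamma (2*s) * 2) s := by
    have := (hasDerivAt_Gamma' h2s).comp s ((hasDerivAt_id s).const_mul 2)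
    simpa [Function.comp_def] using this
  have hG2 : HasDerivAt (fun t : ℝ => (2:ℝ) ^ (1 - 2*t))
      ((2:ℝ) ^ (1 - 2*s) * Real.log 2 * (-2)) s := by
    have hin : HasDerivAt (fun t : ℝ => 1 - 2*t) (-2) s := by
      simpa using ((hasDerivAt_id s).const_mul 2).const_sub 1
    exact ((Real.hasStrictDerivAt_const_rpow two_pos (1 - 2*s)).hasDerivAt).comp s hin
  have hG : HasDerivAt (fun t => Real.Gamma (2*t) * (2:ℝ) ^ (1 - 2*t) * Real.sqrt π)
      ((digamma (2*s) * Real.Gamma (2*s) * 2 * (2:ℝ) ^ (1 - 2*s)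
        + Real.Gamma (2*s) * ((2:ℝ) ^ (1 - 2*s) * Real.log 2 * (-2))) * Real.sqrt π) s :=
    (hG1.mul hG2).mul_const _
  have hFG : (fun t => Real.Gamma t * Real.Gamma (t + 1/2))
      = (fun t => Real.Gamma (2*t) * (2:ℝ) ^ (1 - 2*t) * Real.sqrt π) :=
    funext fun t => Real.Gamma_mul_Gamma_add_half t
  rw [hFG] at hF
  have hu := hF.unique hG
  have hval : Real.Gamma s * Real.Gamma (s + 1/2)
      = Real.Gamma (2*s) * (2:ℝ) ^ (1 - 2*s) * Real.sqrt π :=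
    Real.Gamma_mul_Gamma_add_half s
  have hπ : (0:ℝ) < Real.sqrt π := Real.sqrt_pos.mpr Real.pi_pos
  have hne : Real.Gamma s * Real.Gamma (s + 1/2) ≠ 0 := by positivity
  refine mul_right_cancel₀ hne ?_
  calc (digamma s + digamma (s + 1/2)) * (Real.Gamma s * Real.Gamma (s + 1/2))
      = (digamma s * Real.Gamma s) * Real.Gamma (s + 1/2)
        + Real.Gamma s * (digamma (s + 1/2) * Real.Gamma (s + 1/2) * 1) := by ring
    _ = (digamma (2*s) * Real.Gamma (2*s) * 2 * (2:ℝ) ^ (1 - 2*s)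
        + Real.Gamma (2*s) * ((2:ℝ) ^ (1 - 2*s) * Real.log 2 * (-2))) * Real.sqrt π := hu
    _ = (2 * digamma (2*s) - 2 * Real.log 2)
        * (Real.Gamma (2*s) * (2:ℝ) ^ (1 - 2*s) * Real.sqrt π) := by ring
    _ = (2 * digamma (2*s) - 2 * Real.log 2) * (Real.Gamma s * Real.Gamma (s + 1/2)) := by
        rw [hval]

section Aintegral
variable {α : ℝ}

lemma partA (hα : 0 < α) :
    IntegrableOn (fun u : ℝ => Real.log u * u ^ (-(1+α))) (Ioi 1) ∧
    ∫ u in Ioi (1:ℝ), Real.log u * u ^ (-(1+α)) = 1/α^2 := by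
  set g : ℝ → ℝ := fun u => -(u ^ (-α)) * (Real.log u / α + 1/α^2) with hg
  have hαne : α ≠ 0 := hα.ne'
  have hderiv : ∀ u ∈ Ioi (1:ℝ), HasDerivAt g (Real.log u * u ^ (-(1+α))) u := by
    intro u hu
    have hu0 : (0:ℝ) < u := lt_trans one_pos hu
    have hne : u ≠ 0 := hu0.ne'
    have h1 : HasDerivAt (fun v : ℝ => v ^ (-α)) (-α * u ^ (-α - 1)) u := by
      simpa using Real.hasDerivAt_rpow_const (x := u) (p := -α) (Or.inl hne)
    have h2 : HasDerivAt (fun v : ℝ => Real.log v / α + 1/α^2) (u⁻¹ / α) u :=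
      ((Real.hasDerivAt_log hne).div_const α).add_const _
    have hd := (h1.neg).mul h2
    refine hd.congr_deriv (Eq.symm ?_)
    have hmul : u ^ (-α) * u⁻¹ = u ^ (-α - 1) := by
      rw [← Real.rpow_neg_one u, ← Real.rpow_add hu0]; ring_nf
    have hexp : u ^ (-(1+α)) = u ^ (-α - 1) := by
      rw [show -(1+α) = -α - 1 by ring]
    rw [hexp, ← hmul]
    simp only [Pi.neg_apply]
    field_simp
    ring
  have htends : Tendsto g atTop (𝓝 0) := by
    have t1 : Tendsto (fun u:ℝ => Real.log u / u ^ α) atTop (𝓝 0) :=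
      (isLittleO_log_rpow_atTop hα).tendsto_div_nhds_zero
    have t2 : Tendsto (fun u:ℝ => u ^ (-α)) atTop (𝓝 0) := tendsto_rpow_neg_atTop hα
    have t3 := ((t1.div_const α).add (t2.div_const (α^2))).neg
    rw [show -(0/α + 0/α^2) = (0:ℝ) by ring] at t3
    refine t3.congr' ?_
    filter_upwards [eventually_gt_atTop (0:ℝ)] with u hu
    rw [hg]
    simp only []
    rw [Real.rpow_neg hu.le]
    field_simp
  have hcont : ContinuousWithinAt g (Ici 1) 1 := by
    apply ContinuousAt.continuousWithinAt
    have c1 : ContinuousAt (fun v : ℝ => v ^ (-α)) 1 :=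
      Real.continuousAt_rpow_const 1 (-α) (Or.inl one_ne_zero)
    have c2 : ContinuousAt Real.log 1 := Real.continuousAt_log one_ne_zero
    exact (c1.neg).mul ((c2.div_const α).add continuousAt_const)
  have hpos : ∀ u ∈ Ioi (1:ℝ), 0 ≤ Real.log u * u ^ (-(1+α)) := by
    intro u hu
    have hu0 : (0:ℝ) < u := lt_trans one_pos hu
    have : 0 ≤ Real.log u := Real.log_nonneg (le_of_lt hu)
    positivity
  have hint : IntegrableOn (fun u : ℝ => Real.log u * u ^ (-(1+α))) (Ioi 1) :=
    integrableOn_Ioi_deriv_of_nonneg hcont hderiv hpos htends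
  refine ⟨hint, ?_⟩
  have := integral_Ioi_of_hasDerivAt_of_tendsto hcont hderiv hint htends
  rw [this, hg]
  simp [Real.log_one, Real.one_rpow]
end Aintegral

section Jintegral
variable {α : ℝ}

lemma partJint (hα : 0 < α) :
    IntegrableOn (fun u : ℝ => Real.log (1 + 1/u) * u ^ (-(1+α))) (Ioi 1) := by
  have hg : IntegrableOn (fun u : ℝ => Real.log 2 * u ^ (-(1+α))) (Ioi 1) :=
    (integrableOn_Ioi_rpow_of_lt (by linarith) one_pos).const_mul _
  refine Integrable.mono' hg ?_ ?_
  · refine (ContinuousOn.mul ?_ ?_).aestronglyMeasurable measurableSet_Ioi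
    · refine ContinuousOn.log ?_ ?_
      · exact continuousOn_const.add (continuousOn_const.div continuousOn_id
          (fun u hu => (lt_trans one_pos hu).ne'))
      · intro u hu
        have hu0 : (0:ℝ) < u := lt_trans one_pos hu
        positivity
    · exact fun u hu => (Real.continuousAt_rpow_const u _
        (Or.inl (lt_trans one_pos hu).ne')).continuousWithinAt
  · filter_upwards [ae_restrict_mem measurableSet_Ioi] with u hu
    have hu1 : (1:ℝ) < u := hu
    have hu0 : (0:ℝ) < u := lt_trans one_pos hu1
    have h1 : (0:ℝ) < 1 + 1/u := by positivity
    have hle : 1 + 1/u ≤ 2 := by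
      have : 1/u ≤ 1 := by rw [div_le_one hu0]; linarith
      linarith
    have hlog1 : 0 ≤ Real.log (1 + 1/u) := Real.log_nonneg (by
      have : 0 ≤ 1/u := by positivity
      linarith)
    have hlog2 : Real.log (1 + 1/u) ≤ Real.log 2 := Real.log_le_log h1 hle
    have hrp : (0:ℝ) < u ^ (-(1+α)) := Real.rpow_pos_of_pos hu0 _
    rw [Real.norm_eq_abs, abs_of_nonneg (by positivity)]
    exact mul_le_mul_of_nonneg_right hlog2 hrp.le

lemma partJ (hα : 0 < α) :
    HasSum (fun n : ℕ => (-1:ℝ)^n / (((n:ℝ)+1) * (α+(n:ℝ)+1)))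
      (∫ u in Ioi (1:ℝ), Real.log (1 + 1/u) * u ^ (-(1+α))) := by
  set F : ℕ → ℝ → ℝ := fun n u => -(u ^ (-(1+α))) * ((-1/u)^(n+1) / ((n:ℝ)+1)) with hF
  set e : ℕ → ℝ := fun n => -(1+α) - ((n:ℝ)+1) with he
  have hee : ∀ n, e n < -1 := fun n => by
    have : (0:ℝ) ≤ n := Nat.cast_nonneg n
    rw [he]; dsimp only; linarith
  have hkey : ∀ n : ℕ, ∀ u ∈ Ioi (1:ℝ),
      F n u = ((-1:ℝ)^n / ((n:ℝ)+1)) * u ^ (e n) := by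
    intro n u hu
    have hu0 : (0:ℝ) < u := lt_trans one_pos hu
    have h1 : ((-1:ℝ)/u)^(n+1) = (-1:ℝ)^(n+1) * (u ^ ((n:ℕ)+1) : ℝ)⁻¹ := by
      rw [div_pow, div_eq_mul_inv]
    have h2 : ((u ^ ((n:ℕ)+1) : ℝ))⁻¹ = u ^ (-((n:ℝ)+1)) := by
      rw [← Real.rpow_natCast u (n+1), ← Real.rpow_neg hu0.le]
      push_cast
      ring_nf
    have h3 : u ^ (-(1+α)) * u ^ (-((n:ℝ)+1)) = u ^ (e n) := by
      rw [← Real.rpow_add hu0]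
      simp only [he]
      ring_nf
    rw [hF]
    dsimp only
    rw [h1, h2, pow_succ]
    rw [← h3]
    ring
  have hInt : ∀ n : ℕ, IntegrableOn (F n) (Ioi 1) := by
    intro n
    exact IntegrableOn.congr_fun
      ((integrableOn_Ioi_rpow_of_lt (hee n) one_pos).const_mul ((-1:ℝ)^n / ((n:ℝ)+1)))
      (fun u hu => (hkey n u hu).symm) measurableSet_Ioi
  have hrpowint : ∀ n : ℕ, ∫ u in Ioi (1:ℝ), u ^ (e n) = 1/(α+(n:ℝ)+1) := by
    intro n
    rw [integral_Ioi_rpow_of_lt (hee n) one_pos, Real.one_rpow]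
    rw [show e n + 1 = -(α+(n:ℝ)+1) by rw [he]; ring]
    rw [neg_div_neg_eq]
  have hval : ∀ n : ℕ, ∫ u in Ioi (1:ℝ), F n u = (-1:ℝ)^n / (((n:ℝ)+1) * (α+(n:ℝ)+1)) := by
    intro n
    rw [setIntegral_congr_fun measurableSet_Ioi (fun u hu => hkey n u hu),
      MeasureTheory.integral_const_mul, hrpowint n]
    have h1 : ((n:ℝ)+1) ≠ 0 := by positivity
    have h2 : α+(n:ℝ)+1 ≠ 0 := by positivity
    field_simp
  have hnorm : ∀ n : ℕ, ∫ u in Ioi (1:ℝ), ‖F n u‖ = 1 / (((n:ℝ)+1) * (α+(n:ℝ)+1)) := by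
    intro n
    have : ∀ u ∈ Ioi (1:ℝ), ‖F n u‖ = (1 / ((n:ℝ)+1)) * u ^ (e n) := by
      intro u hu
      have hu0 : (0:ℝ) < u := lt_trans one_pos hu
      rw [hkey n u hu, norm_mul, Real.norm_eq_abs, Real.norm_eq_abs,
        abs_of_pos (Real.rpow_pos_of_pos hu0 _), abs_div, abs_pow, abs_neg, abs_one,
        one_pow, abs_of_pos (by positivity : (0:ℝ) < (n:ℝ)+1)]
    rw [setIntegral_congr_fun measurableSet_Ioi this, MeasureTheory.integral_const_mul,
      hrpowint n]
    have h1 : ((n:ℝ)+1) ≠ 0 := by positivity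
    have h2 : α+(n:ℝ)+1 ≠ 0 := by positivity
    field_simp
  have hsum : Summable (fun n : ℕ => ∫ u in Ioi (1:ℝ), ‖F n u‖) := by
    have hbase : Summable (fun k : ℕ => 1 / ((k:ℝ) + 1) ^ 2) := by
      have := summable_one_div_nat_pow.mpr (by norm_num : 1 < 2)
      have h2 := (summable_nat_add_iff 1).mpr this
      refine h2.congr fun k => ?_
      push_cast
      ring
    refine hbase.of_nonneg_of_le (fun n => ?_) (fun n => ?_)
    · rw [hnorm n]; positivity
    · rw [hnorm n]
      have h1 : (0:ℝ) < (n:ℝ)+1 := by positivity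
      have h2 : ((n:ℝ)+1) ≤ α+(n:ℝ)+1 := by linarith
      calc 1 / (((n:ℝ)+1) * (α+(n:ℝ)+1)) ≤ 1 / (((n:ℝ)+1) * ((n:ℝ)+1)) := by
            apply div_le_div_of_nonneg_left one_pos.le (by positivity)
            exact mul_le_mul_of_nonneg_left h2 h1.le
        _ = 1 / ((n:ℝ)+1)^2 := by ring_nf
  have hmain := MeasureTheory.hasSum_integral_of_summable_integral_norm
    (μ := volume.restrict (Ioi 1)) (F := F) hInt hsum
  have htsum : ∀ u ∈ Ioi (1:ℝ), ∑' n, F n u = Real.log (1 + 1/u) * u ^ (-(1+α)) := by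
    intro u hu
    have hu0 : (0:ℝ) < u := lt_trans one_pos hu
    have habs : |(-1:ℝ)/u| < 1 := by
      rw [abs_div, abs_neg, abs_one, abs_of_pos hu0, div_lt_one hu0]
      exact hu
    have hps := Real.hasSum_pow_div_log_of_abs_lt_one habs
    have h1 : (1:ℝ) - (-1)/u = 1 + 1/u := by ring
    rw [h1] at hps
    have := hps.mul_left (-(u ^ (-(1+α))))
    have heq : HasSum (F · u) (Real.log (1 + 1/u) * u ^ (-(1+α))) := by
      rw [show Real.log (1 + 1/u) * u ^ (-(1+α)) = -(u ^ (-(1+α))) * -Real.log (1 + 1/u) by ring]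
      exact this
    exact heq.tsum_eq
  simp_rw [hval] at hmain
  rwa [setIntegral_congr_fun measurableSet_Ioi (fun u hu => htsum u hu)] at hmain


theorem stmt_2 (α : ℝ) (hα : 0 < α) :
    ∫ u in Ioi (1 : ℝ), Real.log (1 + u) / u ^ (1 + α) =
      (1 / α) * (digamma α - digamma (α / 2)) := by
  have hα' : α ≠ 0 := hα.ne'
  obtain ⟨hintA, hvalA⟩ := partA hα
  have hintJ := partJint hα
  have hJ := partJ hα
  set J : ℝ := ∫ u in Ioi (1:ℝ), Real.log (1 + 1/u) * u ^ (-(1+α)) with hJdef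
  have hsplit : ∫ u in Ioi (1:ℝ), Real.log (1+u)/u^(1+α)
      = (∫ u in Ioi (1:ℝ), Real.log u * u^(-(1+α))) + J := by
    rw [hJdef, ← integral_add hintA hintJ]
    refine setIntegral_congr_fun measurableSet_Ioi fun u hu => ?_
    have hu1 : (1:ℝ) < u := hu
    have hu0 : (0:ℝ) < u := lt_trans one_pos hu1
    have hpos : (0:ℝ) < 1 + 1/u := by positivity
    have hfac : 1 + u = u * (1 + 1/u) := by field_simp; ring
    rw [hfac, Real.log_mul hu0.ne' hpos.ne', Real.rpow_neg hu0.le, div_eq_mul_inv]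
    ring
  -- series T
  set T : ℕ → ℝ := fun n => (-1:ℝ)^n * (1/((n:ℝ)+1) - 1/(α+(n:ℝ)+1)) with hTdef
  have hT : HasSum T (α * J) := by
    have h := hJ.mul_left α
    have he : (fun n : ℕ => α * ((-1:ℝ)^n / (((n:ℝ)+1) * (α+(n:ℝ)+1)))) = T := by
      funext n
      have h1 : ((n:ℝ)+1) ≠ 0 := by positivity
      have h2 : α+(n:ℝ)+1 ≠ 0 := by positivity
      rw [hTdef]
      field_simp
      ring
    rwa [he] at h
  have h12 : (0:ℝ) < 1/2 := by norm_num
  have hy1 : (0:ℝ) < α/2 + 1/2 := by positivity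
  have hE : HasSum (fun m : ℕ => T (2*m))
      ((1/2) * (digamma (α/2+1/2) - digamma (1/2))) := by
    have h := (digamma_hasSum h12 hy1).mul_left (1/2)
    have he : (fun k : ℕ => (1/2) * (1/(1/2+(k:ℝ)) - 1/(α/2+1/2+(k:ℝ))))
        = fun m : ℕ => T (2*m) := by
      funext m
      rw [hTdef]
      have h3 : (-1:ℝ)^(2*m) = 1 := by rw [pow_mul]; norm_num
      push_cast
      rw [h3]
      have h1 : (0:ℝ) < 1/2 + m := by positivity
      have h2 : (0:ℝ) < α/2+1/2+m := by positivity
      have h4 : (0:ℝ) < 2*(m:ℝ)+1 := by positivity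
      have h5 : (0:ℝ) < α+2*(m:ℝ)+1 := by positivity
      field_simp
      ring
    rwa [he] at h
  have hy2 : (0:ℝ) < α/2 + 1 := by positivity
  have hO : HasSum (fun m : ℕ => T (2*m+1))
      (-(1/2) * (digamma (α/2+1) - digamma 1)) := by
    have h := (digamma_hasSum one_pos hy2).mul_left (-(1/2))
    have he : (fun k : ℕ => -(1/2) * (1/(1+(k:ℝ)) - 1/(α/2+1+(k:ℝ))))
        = fun m : ℕ => T (2*m+1) := by
      funext m
      rw [hTdef]
      have h3 : (-1:ℝ)^(2*m+1) = -1 := by rw [pow_succ, pow_mul]; norm_num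
      push_cast
      rw [h3]
      have h1 : (0:ℝ) < 1 + m := by positivity
      have h2 : (0:ℝ) < α/2+1+m := by positivity
      have h4 : (0:ℝ) < 2*(m:ℝ)+1+1 := by positivity
      have h5 : (0:ℝ) < α+(2*(m:ℝ)+1)+1 := by positivity
      field_simp
      ring
    rwa [he] at h
  have hTeq : α * J = (1/2) * (digamma (α/2+1/2) - digamma (1/2))
      + -(1/2) * (digamma (α/2+1) - digamma 1) := hT.unique (hE.even_add_odd hO)
  -- digamma identities
  have hadd : digamma (α/2+1) = digamma (α/2) + 2*(1/α) := by
    have h := digamma_add_one (by positivity : (0:ℝ) < α/2)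
    rw [h]
    congr 1
    field_simp
  have hdup1 := digamma_dup (by positivity : (0:ℝ) < α/2)
  rw [show 2*(α/2) = α by ring] at hdup1
  have hdup2 := digamma_dup (by norm_num : (0:ℝ) < (1:ℝ)/2)
  rw [show (1:ℝ)/2+1/2 = 1 by norm_num, show 2*((1:ℝ)/2) = 1 by norm_num] at hdup2
  have hJval : α * J = digamma α - digamma (α/2) - 1/α := by
    rw [hTeq]
    linarith [hdup1, hdup2, hadd]
  rw [hsplit, hvalA]
  have h2 : J = (digamma α - digamma (α/2) - 1/α) / α := by
    rw [eq_div_iff hα', mul_comm]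
    exact hJval
  rw [h2]
  field_simp
  ring
end Jintegral
end

section
/- For α > 0, the integral ∫₁^∞ log(u-1) / u^{1+α} du equals -(1/α)(γ + ψ(α)), where γ is Euler's constant and ψ is the digamma function. -/
open Real MeasureTheory Set

open Complex Filter in
private lemma hasDerivAt_complex_Gamma_ofReal' {x : ℝ} (hx : 0 < x) :
    HasDerivAt Complex.Gamma ((deriv Real.Gamma x : ℝ) : ℂ) (x : ℂ) := by
  have hx' : ∀ m : ℕ, x ≠ -m := fun m => ((neg_nonpos.mpr m.cast_nonneg).trans_lt hx).ne'
  have hc : ∀ m : ℕ, (x : ℂ) ≠ -m := by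
    intro m h
    exact hx' m (by exact_mod_cast h)
  have h1 := (Complex.differentiableAt_Gamma _ hc).hasDerivAt
  have h2 := h1.comp_ofReal
  have h3 := (Real.differentiableAt_Gamma hx').hasDerivAt.ofReal_comp
  have h4 : HasDerivAt (fun y : ℝ => ((Real.Gamma y : ℝ) : ℂ)) (deriv Complex.Gamma x) x := by
    refine h2.congr_of_eventuallyEq (Eventually.of_forall fun y => ?_)
    exact (Complex.Gamma_ofReal y).symm
  have := h4.unique h3
  rwa [this] at h1

open Complex Filter in
private lemma mellin_indicator' (g : ℝ → ℂ) (s : ℂ) :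
    mellin ((Ioo (0:ℝ) 1).indicator g) s = ∫ t in Ioo (0:ℝ) 1, (t : ℂ) ^ (s - 1) * g t := by
  rw [mellin]
  rw [show (fun t : ℝ => (t : ℂ) ^ (s - 1) • (Ioo (0:ℝ) 1).indicator g t)
      = (Ioo (0:ℝ) 1).indicator (fun t => (t : ℂ) ^ (s - 1) * g t) from ?_]
  · rw [MeasureTheory.integral_indicator measurableSet_Ioo,
      Measure.restrict_restrict measurableSet_Ioo,
      inter_eq_left.mpr (Ioo_subset_Ioi_self)]
  · ext t
    by_cases ht : t ∈ Ioo (0:ℝ) 1 <;> simp [indicator, ht]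

open Complex Filter in
private lemma mellin_log_aux' {α : ℝ} (hα : 0 < α) (g : ℝ → ℝ)
    (hint : IntegrableOn (fun t : ℝ => (g t : ℂ)) (Ioo 0 1))
    (hbot : (fun t : ℝ => (g t : ℂ)) =O[nhdsWithin 0 (Ioi 0)] (fun _ : ℝ => (1:ℝ))) :
    IntegrableOn (fun t : ℝ => t ^ (α - 1) * Real.log t * g t) (Ioo 0 1) ∧
      HasDerivAt (mellin ((Ioo (0:ℝ) 1).indicator (fun t => (g t : ℂ))))
        ((∫ t in Ioo (0:ℝ) 1, t ^ (α - 1) * Real.log t * g t : ℝ) : ℂ) (α : ℂ) := by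
  set f : ℝ → ℂ := (Ioo (0:ℝ) 1).indicator (fun t => (g t : ℂ)) with hf
  have hfc : LocallyIntegrableOn f (Ioi 0) := by
    refine IntegrableOn.locallyIntegrableOn ?_
    exact ((MeasureTheory.integrable_indicator_iff measurableSet_Ioo).mpr hint).integrableOn
  have hf_top : f =O[atTop] (fun t : ℝ => t ^ (-(α + 2))) := by
    have : f =ᶠ[atTop] (fun _ => (0:ℂ)) := by
      filter_upwards [eventually_ge_atTop (1:ℝ)] with t ht
      simp [f, indicator_of_notMem (by simp [ht, not_lt.mpr ht] : t ∉ Ioo (0:ℝ) 1)]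
    exact this.trans_isBigO (Asymptotics.isBigO_zero _ _)
  have hf_bot : f =O[nhdsWithin 0 (Ioi 0)] (fun t : ℝ => t ^ (-(0:ℝ))) := by
    have h1 : f =ᶠ[nhdsWithin 0 (Ioi 0)] (fun t => (g t : ℂ)) := by
      filter_upwards [Ioo_mem_nhdsGT_of_mem (by norm_num : (0:ℝ) ∈ Ico 0 1)] with t ht
      simp [f, indicator_of_mem ht]
    refine (h1.trans_isBigO hbot).congr' (EventuallyEq.refl _ _) ?_
    filter_upwards [self_mem_nhdsWithin] with t (ht : 0 < t)
    rw [neg_zero, Real.rpow_zero]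
  obtain ⟨hconv, hder⟩ := mellin_hasDerivAt_of_isBigO_rpow hfc hf_top
    (by simp : (α : ℂ).re < α + 2) hf_bot (by simpa using hα)
  have hind : (fun t => Real.log t • f t)
      = (Ioo (0:ℝ) 1).indicator (fun t => ((Real.log t * g t : ℝ) : ℂ)) := by
    ext t
    by_cases ht : t ∈ Ioo (0:ℝ) 1 <;>
      simp [hf, indicator_of_mem, indicator_of_notMem, ht, Complex.real_smul]
  have key : ∀ t ∈ Ioo (0:ℝ) 1,
      (t : ℂ) ^ ((α : ℂ) - 1) * ((Real.log t * g t : ℝ) : ℂ)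
        = ((t ^ (α - 1) * Real.log t * g t : ℝ) : ℂ) := by
    intro t ht
    rw [show ((α : ℂ) - 1) = ((α - 1 : ℝ) : ℂ) by push_cast; ring,
      ← Complex.ofReal_cpow ht.1.le]
    push_cast
    ring
  have hmval : mellin (fun t => Real.log t • f t) (α : ℂ)
      = ((∫ t in Ioo (0:ℝ) 1, t ^ (α - 1) * Real.log t * g t : ℝ) : ℂ) := by
    rw [hind, mellin_indicator',
      MeasureTheory.setIntegral_congr_fun measurableSet_Ioo (fun t ht => key t ht)]
    exact integral_ofReal
  refine ⟨?_, hmval ▸ hder⟩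
  have h2 : IntegrableOn (fun t : ℝ => ((t ^ (α - 1) * Real.log t * g t : ℝ) : ℂ)) (Ioo 0 1) := by
    refine (hconv.mono_set Ioo_subset_Ioi_self).congr_fun (fun t ht => ?_) measurableSet_Ioo
    rw [hind]
    simp only [indicator_of_mem ht]
    exact key t ht
  simpa [IntegrableOn] using h2.re

open Complex Filter in
private lemma integral_rpow_mul_log' {α : ℝ} (hα : 0 < α) :
    IntegrableOn (fun t : ℝ => t ^ (α - 1) * Real.log t) (Ioo 0 1) ∧
    ∫ t in Ioo (0:ℝ) 1, t ^ (α - 1) * Real.log t = -(α ^ 2)⁻¹ := by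
  obtain ⟨hint, hder⟩ := mellin_log_aux' hα (fun _ => 1)
    ((integrableOn_const_iff (C := ((1:ℝ):ℂ))).mpr (Or.inr measure_Ioo_lt_top))
    (Asymptotics.isBigO_const_const _ one_ne_zero _)
  simp only [mul_one] at hint hder
  refine ⟨hint, ?_⟩
  have hev : mellin ((Ioo (0:ℝ) 1).indicator (fun _ : ℝ => ((1:ℝ) : ℂ)))
      =ᶠ[nhds (α : ℂ)] fun z => 1 / z := by
    have hopen : IsOpen {z : ℂ | 0 < z.re} := isOpen_lt continuous_const Complex.continuous_re
    filter_upwards [hopen.mem_nhds (by simpa using hα)] with z (hz : 0 < z.re)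
    rw [mellin_indicator', ← Complex.betaIntegral_eval_one_right hz, Complex.betaIntegral]
    rw [intervalIntegral.integral_of_le zero_le_one, integral_Ioc_eq_integral_Ioo]
    refine setIntegral_congr_fun measurableSet_Ioo (fun t ht => ?_)
    norm_num
  have h1 : HasDerivAt (fun z : ℂ => 1 / z) (((∫ t in Ioo (0:ℝ) 1,
      t ^ (α - 1) * Real.log t : ℝ)) : ℂ) (α : ℂ) := by
    exact (hev.hasDerivAt_iff).mp hder
  have h2 : HasDerivAt (fun z : ℂ => 1 / z) (-(((α:ℂ)) ^ 2)⁻¹) (α : ℂ) := by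
    simpa [one_div] using hasDerivAt_inv (by exact_mod_cast hα.ne' : (α:ℂ) ≠ 0)
  have := h1.unique h2
  exact_mod_cast this

open Complex Filter in
private lemma integrableOn_one_sub_rpow' {α : ℝ} (hα : 0 < α) :
    IntegrableOn (fun t : ℝ => (1 - t) ^ (α - 1)) (Ioo 0 1) := by
  have h1 : IntervalIntegrable (fun x : ℝ => x ^ (α - 1)) volume 0 1 :=
    intervalIntegral.intervalIntegrable_rpow' (by linarith)
  have h2 := h1.comp_sub_left 1
  simp only [sub_zero, sub_self] at h2
  exact (intervalIntegrable_iff_integrableOn_Ioo_of_le zero_le_one).mp h2.symm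

open Complex Filter in
private lemma integral_log_mul_one_sub_rpow' {α : ℝ} (hα : 0 < α) :
    IntegrableOn (fun t : ℝ => Real.log t * (1 - t) ^ (α - 1)) (Ioo 0 1) ∧
    ∫ t in Ioo (0:ℝ) 1, Real.log t * (1 - t) ^ (α - 1)
      = (deriv Real.Gamma 1 * Real.Gamma (1 + α) - deriv Real.Gamma (1 + α))
          * Real.Gamma α / Real.Gamma (1 + α) ^ 2 := by
  have hint : IntegrableOn (fun t : ℝ => (((1 - t) ^ (α - 1) : ℝ) : ℂ)) (Ioo 0 1) :=
    (integrableOn_one_sub_rpow' hα).ofReal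
  have hbot : (fun t : ℝ => (((1 - t) ^ (α - 1) : ℝ) : ℂ))
      =O[nhdsWithin 0 (Ioi 0)] (fun _ : ℝ => (1:ℝ)) := by
    have hc : ContinuousAt (fun t : ℝ => (((1 - t) ^ (α - 1) : ℝ) : ℂ)) 0 := by
      apply Complex.continuous_ofReal.continuousAt.comp
      exact ((continuous_const.sub continuous_id).continuousAt).rpow_const
        (Or.inl (by norm_num))
    exact (hc.tendsto.mono_left nhdsWithin_le_nhds).isBigO_one ℝ
  obtain ⟨hint', hder⟩ := mellin_log_aux' one_pos _ hint hbot
  simp only [sub_self, Real.rpow_zero, one_mul] at hint' hder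
  refine ⟨hint', ?_⟩
  have hev : mellin ((Ioo (0:ℝ) 1).indicator (fun t => (((1 - t) ^ (α - 1) : ℝ) : ℂ)))
      =ᶠ[nhds ((1:ℝ) : ℂ)] fun z => Complex.Gamma z * ((Real.Gamma α : ℝ) : ℂ)
          / Complex.Gamma (z + α) := by
    have hopen : IsOpen {z : ℂ | 0 < z.re} := isOpen_lt continuous_const Complex.continuous_re
    filter_upwards [hopen.mem_nhds (by norm_num)] with z (hz : 0 < z.re)
    have hαre : 0 < ((α : ℝ) : ℂ).re := by simpa using hα
    have hne : Complex.Gamma (z + α) ≠ 0 := by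
      refine Complex.Gamma_ne_zero fun m h => ?_
      have := congrArg Complex.re h
      simp only [Complex.add_re, Complex.ofReal_re, Complex.neg_re, Complex.natCast_re] at this
      have : z.re + α ≤ 0 := by rw [this]; exact neg_nonpos.mpr m.cast_nonneg
      linarith
    rw [mellin_indicator']
    have hbeta : (∫ t in Ioo (0:ℝ) 1, (t : ℂ) ^ (z - 1) * (((1 - t) ^ (α - 1) : ℝ) : ℂ))
        = Complex.betaIntegral z α := by
      rw [Complex.betaIntegral, intervalIntegral.integral_of_le zero_le_one,
        integral_Ioc_eq_integral_Ioo]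
      refine setIntegral_congr_fun measurableSet_Ioo (fun t ht => ?_) |>.symm
      rw [show ((α : ℂ) - 1) = ((α - 1 : ℝ) : ℂ) by push_cast; ring,
        show ((1:ℂ) - (t:ℂ)) = (((1 - t : ℝ)) : ℂ) by push_cast; ring,
        ← Complex.ofReal_cpow (by linarith [ht.2] : (0:ℝ) ≤ 1 - t)]
    rw [hbeta, eq_div_iff hne, ← Complex.Gamma_ofReal]
    linear_combination (Complex.Gamma_mul_Gamma_eq_betaIntegral hz hαre).symm
  have h1 : HasDerivAt (fun z : ℂ => Complex.Gamma z * ((Real.Gamma α : ℝ) : ℂ)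
      / Complex.Gamma (z + α))
      ((∫ t in Ioo (0:ℝ) 1, Real.log t * (1 - t) ^ (α - 1) : ℝ) : ℂ) ((1:ℝ) : ℂ) := by
    rw [show (((1:ℝ)) : ℂ) = (1 : ℂ) by norm_num] at hev ⊢
    exact (hev.hasDerivAt_iff).mp (by simpa using hder)
  have hΓ1 : HasDerivAt (fun z : ℂ => Complex.Gamma z * ((Real.Gamma α : ℝ) : ℂ))
      (((deriv Real.Gamma 1 : ℝ) : ℂ) * ((Real.Gamma α : ℝ) : ℂ)) ((1:ℝ) : ℂ) :=
    (hasDerivAt_complex_Gamma_ofReal' one_pos).mul_const _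
  have hΓα : HasDerivAt (fun z : ℂ => Complex.Gamma (z + α))
      ((deriv Real.Gamma (1 + α) : ℝ) : ℂ) ((1:ℝ) : ℂ) := by
    exact HasDerivAt.comp_add_const ((1:ℝ):ℂ) ((α:ℝ):ℂ)
      (by rw [show ((1:ℝ):ℂ) + ((α:ℝ):ℂ) = ((1 + α : ℝ) : ℂ) by push_cast; ring]
          exact hasDerivAt_complex_Gamma_ofReal' (by linarith : (0:ℝ) < 1 + α))
  have hne1 : Complex.Gamma (((1:ℝ):ℂ) + α) ≠ 0 := by
    rw [show ((1:ℝ):ℂ) + ((α:ℝ):ℂ) = ((1 + α : ℝ) : ℂ) by push_cast; ring,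
      Complex.Gamma_ofReal]
    exact_mod_cast Real.Gamma_ne_zero (fun m => by
      have : (0:ℝ) < 1 + α := by linarith
      exact (((neg_nonpos.mpr m.cast_nonneg)).trans_lt this).ne')
  have h2 := hΓ1.div hΓα hne1
  have h3 := h1.unique h2
  rw [show ((1:ℝ):ℂ) + ((α:ℝ):ℂ) = ((1 + α : ℝ) : ℂ) by push_cast; ring,
    Complex.Gamma_ofReal,
    show Complex.Gamma (((1:ℝ)):ℂ) = ((Real.Gamma 1 : ℝ) : ℂ) from Complex.Gamma_ofReal 1,
    Real.Gamma_one] at h3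
  apply Complex.ofReal_inj.mp
  rw [h3]
  push_cast
  ring

open Filter in
private lemma deriv_Gamma_add_one'' {α : ℝ} (hα : 0 < α) :
    deriv Real.Gamma (1 + α) = Real.Gamma α + α * deriv Real.Gamma α := by
  have hd : ∀ {x : ℝ}, 0 < x → DifferentiableAt ℝ Real.Gamma x := fun {x} hx =>
    Real.differentiableAt_Gamma fun m => (((neg_nonpos.mpr m.cast_nonneg)).trans_lt hx).ne'
  have h1 : HasDerivAt (fun x : ℝ => Real.Gamma (x + 1)) (deriv Real.Gamma (α + 1)) α :=
    HasDerivAt.comp_add_const α 1 (hd (by linarith)).hasDerivAt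
  have h2 : HasDerivAt (fun x : ℝ => x * Real.Gamma x)
      (Real.Gamma α + α * deriv Real.Gamma α) α := by
    have := (hasDerivAt_id α).fun_mul (hd hα).hasDerivAt
    simpa [add_comm] using this
  have hev : (fun x : ℝ => Real.Gamma (x + 1)) =ᶠ[nhds α] fun x => x * Real.Gamma x := by
    filter_upwards [eventually_gt_nhds hα] with x hx
    exact Real.Gamma_add_one hx.ne'
  have h3 := (h1.congr_of_eventuallyEq hev.symm).unique h2
  rw [add_comm, h3]

private lemma cov_inv' {α : ℝ} (hα : 0 < α) :
    ∫ u in Ioi (1:ℝ), Real.log (u - 1) / u ^ (1 + α)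
      = ∫ t in Ioo (0:ℝ) 1, (Real.log (1 - t) - Real.log t) * t ^ (α - 1) := by
  have himg : (fun t : ℝ => t⁻¹) '' Ioo 0 1 = Ioi 1 := by
    ext y
    simp only [mem_image, mem_Ioo, mem_Ioi]
    constructor
    · rintro ⟨t, ⟨h0, h1⟩, rfl⟩
      exact (one_lt_inv_iff₀).mpr ⟨h0, h1⟩
    · intro hy
      have hy0 : 0 < y := lt_trans one_pos hy
      exact ⟨y⁻¹, ⟨by positivity, inv_lt_one_of_one_lt₀ hy⟩, inv_inv y⟩
  have hderiv : ∀ t ∈ Ioo (0:ℝ) 1,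
      HasDerivWithinAt (fun t : ℝ => t⁻¹) (-(t ^ 2)⁻¹) (Ioo 0 1) t := fun t ht =>
    (hasDerivAt_inv ht.1.ne').hasDerivWithinAt
  have hinj : InjOn (fun t : ℝ => t⁻¹) (Ioo 0 1) := fun a _ b _ h => inv_injective h
  rw [← himg, integral_image_eq_integral_abs_deriv_smul measurableSet_Ioo hderiv hinj]
  refine setIntegral_congr_fun measurableSet_Ioo (fun t ht => ?_)
  obtain ⟨h0, h1⟩ := ht
  have h1t : (0:ℝ) < 1 - t := by linarith
  rw [smul_eq_mul, abs_of_neg (by simp; positivity : -((t:ℝ) ^ 2)⁻¹ < 0), neg_neg]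
  rw [show t⁻¹ - 1 = (1 - t) / t by field_simp]
  rw [Real.log_div h1t.ne' h0.ne', Real.inv_rpow h0.le]
  have hpow : t ^ (1 + α) = t ^ (α - 1) * t ^ 2 := by
    rw [show (t:ℝ) ^ 2 = t ^ ((2:ℕ):ℝ) from (Real.rpow_natCast t 2).symm,
      ← Real.rpow_add h0]
    norm_num
    rw [show α - 1 + 2 = 1 + α by ring]
  rw [hpow]
  field_simp

theorem stmt_3 (α : ℝ) (hα : 0 < α) :
    ∫ u in Ioi (1 : ℝ), Real.log (u - 1) / u ^ (1 + α) =
      -(1 / α) * (Real.eulerMascheroniConstant + digamma α) := by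
  obtain ⟨hintB, hB⟩ := integral_rpow_mul_log' hα
  obtain ⟨hintA0, hA0⟩ := integral_log_mul_one_sub_rpow' hα
  -- reflection : ∫ log(1-t) * t^(α-1) over (0,1)
  have hreflInt : IntegrableOn (fun t : ℝ => Real.log (1 - t) * t ^ (α - 1)) (Ioo 0 1) := by
    have h1 : IntervalIntegrable (fun t : ℝ => Real.log t * (1 - t) ^ (α - 1)) volume 0 1 :=
      (intervalIntegrable_iff_integrableOn_Ioo_of_le zero_le_one).mpr hintA0
    have h2 := h1.comp_sub_left 1
    simp only [sub_zero, sub_self] at h2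
    have h3 := (intervalIntegrable_iff_integrableOn_Ioo_of_le zero_le_one).mp h2.symm
    refine h3.congr_fun (fun t ht => ?_) measurableSet_Ioo
    simp only [sub_sub_cancel]
  have hrefl : ∫ t in Ioo (0:ℝ) 1, Real.log (1 - t) * t ^ (α - 1)
      = ∫ t in Ioo (0:ℝ) 1, Real.log t * (1 - t) ^ (α - 1) := by
    rw [← integral_Ioc_eq_integral_Ioo, ← integral_Ioc_eq_integral_Ioo,
      ← intervalIntegral.integral_of_le zero_le_one,
      ← intervalIntegral.integral_of_le zero_le_one]
    have := intervalIntegral.integral_comp_sub_left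
      (a := 0) (b := 1) (fun t : ℝ => Real.log t * (1 - t) ^ (α - 1)) 1
    simp only [sub_zero, sub_self] at this
    rw [← this]
    congr 1
    ext t
    rw [sub_sub_cancel]
  rw [cov_inv' hα]
  have hsplit : ∫ t in Ioo (0:ℝ) 1, (Real.log (1 - t) - Real.log t) * t ^ (α - 1)
      = (∫ t in Ioo (0:ℝ) 1, Real.log (1 - t) * t ^ (α - 1))
        - ∫ t in Ioo (0:ℝ) 1, t ^ (α - 1) * Real.log t := by
    rw [← integral_sub hreflInt hintB]
    refine setIntegral_congr_fun measurableSet_Ioo (fun t ht => ?_)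
    ring
  rw [hsplit, hrefl, hA0, hB]
  -- final algebra
  have hG1 : deriv Real.Gamma 1 = -Real.eulerMascheroniConstant := by
    rw [Real.eulerMascheroniConstant_eq_neg_deriv, neg_neg]
  have hGa1 : Real.Gamma (1 + α) = α * Real.Gamma α := by
    rw [add_comm, Real.Gamma_add_one hα.ne']
  have hGd : deriv Real.Gamma (1 + α) = Real.Gamma α + α * deriv Real.Gamma α :=
    deriv_Gamma_add_one'' hα
  have hGne : Real.Gamma α ≠ 0 := (Real.Gamma_pos_of_pos hα).ne'
  rw [hG1, hGa1, hGd, digamma]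
  field_simp
  ring
end

section
/- For α ∈ (0,2), the integral ∫₀¹ log(1-u²) / u^{1+α} du equals (1/α)(γ + ψ(1 - α/2)). -/
open Real MeasureTheory Set Filter Topology Finset

lemma digamma_series {x : ℝ} (hx0 : 0 < x) (hx1 : x < 1) :
    Real.eulerMascheroniConstant + digamma x
      = ∑' n : ℕ, (1 / (n + 1 : ℝ) - 1 / (x + n)) := by
  set f := Real.log ∘ Real.Gamma with hf
  have hne : ∀ {y : ℝ}, 0 < y → ∀ m : ℕ, y ≠ -m := by
    intro y hy m
    have : (0:ℝ) ≤ m := Nat.cast_nonneg m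
    intro h; rw [h] at hy; linarith
  have hder : ∀ {y : ℝ}, 0 < y → DifferentiableAt ℝ f y := by
    intro y hy
    exact (Real.differentiableAt_Gamma (hne hy)).log (Real.Gamma_pos_of_pos hy).ne'
  have hdig : ∀ {y : ℝ}, 0 < y → digamma y = deriv f y := by
    intro y hy
    rw [hf, Function.comp_def, _root_.deriv.log (Real.differentiableAt_Gamma (hne hy))
      (Real.Gamma_pos_of_pos hy).ne']
    rfl
  have hrec : ∀ y : ℝ, 0 < y → digamma (y + 1) = digamma y + 1 / y := by
    intro y hy
    rw [hdig (by linarith), hdig hy]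
    rw [← deriv_comp_add_const, one_div, ← Real.deriv_log,
      ← deriv_add (hder hy) (Real.differentiableAt_log hy.ne')]
    apply Filter.EventuallyEq.deriv_eq
    filter_upwards [eventually_gt_nhds hy] with t ht
    simp only [f, Pi.add_apply, Function.comp_apply, Real.Gamma_add_one ht.ne',
      Real.log_mul ht.ne' (Real.Gamma_pos_of_pos ht).ne', add_comm]
  have hnat : ∀ n : ℕ, digamma (n + 1) = -Real.eulerMascheroniConstant + harmonic n := by
    intro n
    have hfac : ((n.factorial : ℝ)) ≠ 0 := by positivity
    rw [digamma, Real.deriv_Gamma_nat, Real.Gamma_nat_eq_factorial,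
      mul_div_cancel_left₀ _ hfac]
  have haddnat : ∀ n : ℕ, digamma (x + n) = digamma x + ∑ k ∈ range n, 1 / (x + k) := by
    intro n
    induction n with
    | zero => simp
    | succ n ih =>
        have : x + (n + 1 : ℕ) = (x + n) + 1 := by push_cast; ring
        rw [this, hrec (x + n) (by positivity), ih, sum_range_succ]
        ring
  have hmono : ∀ a b : ℝ, 0 < a → 0 < b → a ≤ b → digamma a ≤ digamma b := by
    intro a b ha hb hab
    rw [hdig ha, hdig hb]
    exact (Real.convexOn_log_Gamma.monotoneOn_deriv (fun y hy => hder hy))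
      (mem_Ioi.mpr ha) (mem_Ioi.mpr hb) hab
  have hSm : ∀ m : ℕ, ∑ k ∈ range m, (1 / (k + 1 : ℝ) - 1 / (x + k))
      = (harmonic m : ℝ) - ∑ k ∈ range m, 1 / (x + k) := by
    intro m
    rw [Finset.sum_sub_distrib]
    congr 1
    rw [harmonic]; push_cast; simp [one_div]
  set S : ℕ → ℝ := fun m => ∑ k ∈ range m, (1 / (k + 1 : ℝ) - 1 / (x + k)) with hS
  have hUB : ∀ n : ℕ, digamma x ≤ -Real.eulerMascheroniConstant + S (n + 1) := by
    intro n
    have h1 : digamma (x + (n + 1 : ℕ)) ≤ digamma ((n + 1 : ℕ) + 1) := by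
      apply hmono _ _ (by positivity) (by positivity)
      push_cast; linarith
    rw [haddnat (n + 1), hnat (n + 1)] at h1
    have h2 := hSm (n + 1)
    rw [show S (n+1) = ∑ k ∈ range (n+1), (1 / (k + 1 : ℝ) - 1 / (x + k)) from rfl, h2]
    linarith
  have hLB : ∀ n : ℕ, -Real.eulerMascheroniConstant + S (n + 1) - 1 / (n + 1 : ℝ)
      ≤ digamma x := by
    intro n
    have h1 : digamma ((n : ℝ) + 1) ≤ digamma (x + (n + 1 : ℕ)) := by
      apply hmono _ _ (by positivity) (by positivity)
      push_cast; linarith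
    rw [haddnat (n + 1), hnat n] at h1
    have hh2 : (harmonic (n+1) : ℝ) = harmonic n + 1 / (n + 1 : ℝ) := by
      rw [harmonic_succ]; push_cast; simp [one_div]
    have h2 := hSm (n + 1)
    rw [show S (n+1) = ∑ k ∈ range (n+1), (1 / (k + 1 : ℝ) - 1 / (x + k)) from rfl, h2]
    linarith
  have hsum : Summable (fun n : ℕ => 1 / (n + 1 : ℝ) - 1 / (x + n)) := by
    have hg : Summable (fun n : ℕ => (1/x) * (1 / (n + 1 : ℝ)^2)) := by
      apply Summable.mul_left
      have h1 : Summable (fun n : ℕ => 1 / ((n:ℝ))^2) := by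
        rw [summable_one_div_nat_pow]; norm_num
      have h2 := (summable_nat_add_iff 1).mpr h1
      apply h2.congr
      intro n; push_cast; ring
    have h' : Summable (fun n : ℕ => 1 / (x + (n:ℝ)) - 1 / (n + 1)) := by
      apply Summable.of_nonneg_of_le _ _ hg
      · intro n
        have h1 : (0:ℝ) < x + n := by positivity
        have h2 : (0:ℝ) < n + 1 := by positivity
        rw [sub_nonneg]
        apply one_div_le_one_div_of_le h1
        linarith
      · intro n
        have h1 : (0:ℝ) < x + n := by positivity
        have h2 : (0:ℝ) < n + 1 := by positivity
        have hx' : x * (n + 1) ≤ x + n := by nlinarith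
        have e1 : 1 / (x + (n:ℝ)) - 1 / (n+1) = (1 * (n+1) - (x + n) * 1) / ((x + n) * (n+1)) :=
          div_sub_div _ _ h1.ne' h2.ne'
        have e2 : (1/x) * (1 / ((n:ℝ) + 1)^2) = 1 / (x * ((n:ℝ)+1)^2) := by
          rw [div_mul_div_comm, one_mul]
        rw [e1, e2, div_le_div_iff₀ (by positivity) (by positivity)]
        nlinarith [mul_le_mul_of_nonneg_left hx' h2.le, sq_nonneg ((n:ℝ)+1),
          mul_nonneg hx0.le (sq_nonneg ((n:ℝ)+1))]
    have := h'.neg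
    apply this.congr
    intro n; ring
  have hts : Tendsto S atTop (𝓝 (∑' n : ℕ, (1 / (n + 1 : ℝ) - 1 / (x + n)))) := by
    rw [hS]
    exact hsum.hasSum.tendsto_sum_nat
  have hts1 : Tendsto (fun n => S (n + 1)) atTop
      (𝓝 (∑' n : ℕ, (1 / (n + 1 : ℝ) - 1 / (x + n)))) :=
    hts.comp (tendsto_add_atTop_nat 1)
  have h0 : Tendsto (fun n : ℕ => 1 / (n + 1 : ℝ)) atTop (𝓝 0) :=
    tendsto_one_div_add_atTop_nhds_zero_nat
  have hle : digamma x ≤ -Real.eulerMascheroniConstant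
      + ∑' n : ℕ, (1 / (n + 1 : ℝ) - 1 / (x + n)) := by
    apply ge_of_tendsto (tendsto_const_nhds.add hts1)
    exact Eventually.of_forall hUB
  have hge : -Real.eulerMascheroniConstant
      + ∑' n : ℕ, (1 / (n + 1 : ℝ) - 1 / (x + n)) ≤ digamma x := by
    have : Tendsto (fun n : ℕ => -Real.eulerMascheroniConstant + S (n+1) - 1/(n+1:ℝ)) atTop
        (𝓝 (-Real.eulerMascheroniConstant
          + (∑' n : ℕ, (1 / (n + 1 : ℝ) - 1 / (x + n))) - 0)) :=
      (tendsto_const_nhds.add hts1).sub h0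
    rw [sub_zero] at this
    exact le_of_tendsto this (Eventually.of_forall hLB)
  linarith


lemma integralA (α : ℝ) (hα₁ : 0 < α) (hα₂ : α < 2) :
    ∫ u in Ioo (0 : ℝ) 1, Real.log (1 - u ^ 2) / u ^ (1 + α) =
      ∑' n : ℕ, -(1 / (((n : ℝ) + 1) * (2 * n + 2 - α))) := by
  set F : ℕ → ℝ → ℝ := fun n u => -(u ^ (2 * (n : ℝ) + 1 - α) / (n + 1)) with hF
  have hr : ∀ n : ℕ, (-1 : ℝ) < 2 * (n : ℝ) + 1 - α := by
    intro n
    have : (0:ℝ) ≤ n := Nat.cast_nonneg n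
    linarith
  -- pointwise equality on Ioo
  have hpt : ∀ u ∈ Ioo (0:ℝ) 1, Real.log (1 - u ^ 2) / u ^ (1 + α) = ∑' n, F n u := by
    intro u hu
    obtain ⟨hu0, hu1⟩ := hu
    have habs : |u ^ 2| < 1 := by
      rw [abs_of_nonneg (by positivity)]
      nlinarith
    have hs := Real.hasSum_pow_div_log_of_abs_lt_one habs
    have hs2 : HasSum (fun n : ℕ => -((u ^ 2) ^ (n + 1) / (n + 1)) / u ^ (1 + α))
        (Real.log (1 - u ^ 2) / u ^ (1 + α)) := by
      have := (hs.neg).div_const (u ^ (1 + α))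
      simpa using this
    have : ∀ n : ℕ, -((u ^ 2) ^ (n + 1) / (n + 1)) / u ^ (1 + α) = F n u := by
      intro n
      have h1 : (u ^ 2 : ℝ) ^ (n + 1) = u ^ ((2 * (n:ℝ) + 2)) := by
        rw [← pow_mul, ← Real.rpow_natCast u ((2 * (n + 1)))]
        push_cast; ring_nf
      show -((u ^ 2) ^ (n + 1) / (n + 1)) / u ^ (1 + α)
        = -(u ^ (2 * (n : ℝ) + 1 - α) / (n + 1))
      rw [neg_div, neg_inj, div_right_comm, h1, ← Real.rpow_sub hu0,
        show (2 * (n:ℝ) + 2) - (1 + α) = 2 * n + 1 - α by ring]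
    rw [funext this] at hs2
    exact hs2.tsum_eq.symm
  rw [setIntegral_congr_fun measurableSet_Ioo hpt]
  -- integrability and value of each piece
  have hint : ∀ n : ℕ, IntegrableOn (F n) (Ioo (0:ℝ) 1) := by
    intro n
    have h1 : IntervalIntegrable (fun u : ℝ => u ^ (2 * (n : ℝ) + 1 - α)) volume 0 1 :=
      intervalIntegral.intervalIntegrable_rpow' (hr n)
    rw [intervalIntegrable_iff_integrableOn_Ioo_of_le zero_le_one] at h1
    exact (h1.div_const _).neg
  have hval : ∀ n : ℕ, ∫ u in Ioo (0:ℝ) 1, u ^ (2 * (n : ℝ) + 1 - α)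
      = 1 / (2 * n + 2 - α) := by
    intro n
    rw [← MeasureTheory.integral_Ioc_eq_integral_Ioo,
      ← intervalIntegral.integral_of_le zero_le_one,
      integral_rpow (Or.inl (hr n))]
    have h2 : 2 * (n:ℝ) + 1 - α + 1 = 2 * n + 2 - α := by ring
    have h3 : (0:ℝ) < 2 * (n:ℝ) + 2 - α := by
      have : (0:ℝ) ≤ n := Nat.cast_nonneg n
      linarith
    rw [h2, Real.one_rpow, Real.zero_rpow h3.ne', sub_zero, one_div]
  have hvalF : ∀ n : ℕ, ∫ u in Ioo (0:ℝ) 1, F n u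
      = -(1 / (((n : ℝ) + 1) * (2 * n + 2 - α))) := by
    intro n
    rw [hF]
    rw [integral_neg, integral_div, hval n]
    rw [div_div, one_div, one_div, mul_comm ((n:ℝ)+1)]
  have h3 : ∀ n : ℕ, (0:ℝ) < 2 * (n:ℝ) + 2 - α := by
    intro n
    have : (0:ℝ) ≤ n := Nat.cast_nonneg n
    linarith
  -- summability of the integrals of norms
  have hsum : Summable (fun n : ℕ => 1 / (((n : ℝ) + 1) * (2 * n + 2 - α))) := by
    have hg : Summable (fun n : ℕ => (1/(2 - α)) * (1 / ((n:ℝ) + 1) ^ 2)) := by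
      apply Summable.mul_left
      have h1 : Summable (fun n : ℕ => 1 / ((n:ℝ))^2) := by
        rw [summable_one_div_nat_pow]; norm_num
      have h2 := (summable_nat_add_iff 1).mpr h1
      apply h2.congr
      intro n; push_cast; ring
    apply Summable.of_nonneg_of_le _ _ hg
    · intro n
      have := h3 n
      positivity
    · intro n
      have h2 : (0:ℝ) < (n:ℝ) + 1 := by positivity
      have e2 : (1/(2-α)) * (1 / ((n:ℝ) + 1)^2) = 1 / ((2-α) * ((n:ℝ)+1)^2) := by
        rw [div_mul_div_comm, one_mul]
      rw [e2]
      apply one_div_le_one_div_of_le (mul_pos (by linarith) (by positivity))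
      have hn : (0:ℝ) ≤ n := Nat.cast_nonneg n
      nlinarith [mul_nonneg (mul_nonneg hα₁.le hn) (by linarith : (0:ℝ) ≤ (n:ℝ) + 1)]
  -- apply integral_tsum
  have hmeas : ∀ n : ℕ, AEStronglyMeasurable (F n) (volume.restrict (Ioo (0:ℝ) 1)) := by
    intro n
    exact (hint n).aestronglyMeasurable
  have hnorm : ∑' n : ℕ, ∫⁻ u in Ioo (0:ℝ) 1, ‖F n u‖₊ ≠ ⊤ := by
    have heq : ∀ n : ℕ, ∫⁻ u in Ioo (0:ℝ) 1, ‖F n u‖₊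
        = ENNReal.ofReal (1 / (((n : ℝ) + 1) * (2 * n + 2 - α))) := by
      intro n
      simp only [← enorm_eq_nnnorm]
      rw [← ofReal_integral_norm_eq_lintegral_enorm (hint n)]
      congr 1
      have : ∀ u ∈ Ioo (0:ℝ) 1, ‖F n u‖ = u ^ (2 * (n : ℝ) + 1 - α) / (n + 1) := by
        intro u hu
        obtain ⟨hu0, hu1⟩ := hu
        rw [hF, norm_neg, Real.norm_eq_abs, abs_of_nonneg]
        exact div_nonneg (Real.rpow_nonneg hu0.le _) (by positivity)
      rw [setIntegral_congr_fun measurableSet_Ioo this, integral_div, hval n,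
        div_div, one_div, one_div, mul_comm ((n:ℝ)+1)]
    rw [funext heq, ← ENNReal.ofReal_tsum_of_nonneg _ hsum]
    · exact ENNReal.ofReal_ne_top
    · intro n
      have := h3 n
      positivity
  rw [MeasureTheory.integral_tsum hmeas hnorm]
  exact tsum_congr hvalF

theorem stmt_4 (α : ℝ) (hα₁ : 0 < α) (hα₂ : α < 2) :
    ∫ u in Ioo (0 : ℝ) 1, Real.log (1 - u ^ 2) / u ^ (1 + α) =
      (1 / α) * (Real.eulerMascheroniConstant + digamma (1 - α / 2)) := by
  rw [integralA α hα₁ hα₂]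
  have hx0 : (0:ℝ) < 1 - α / 2 := by linarith
  have hx1 : (1:ℝ) - α / 2 < 1 := by linarith
  have hB := digamma_series hx0 hx1
  have hterm : ∀ n : ℕ, (1 / ((n:ℝ) + 1) - 1 / ((1 - α / 2) + n))
      = α * (-(1 / (((n : ℝ) + 1) * (2 * n + 2 - α)))) := by
    intro n
    have hn : (0:ℝ) ≤ n := Nat.cast_nonneg n
    have d1 : ((n:ℝ) + 1) ≠ 0 := by positivity
    have d2 : (1 - α / 2) + (n:ℝ) ≠ 0 := ne_of_gt (by linarith)
    have d3 : (2 * (n:ℝ) + 2 - α) ≠ 0 := ne_of_gt (by linarith)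
    have e1 : (1:ℝ) - α / 2 + n = (2 * n + 2 - α) / 2 := by ring
    rw [e1, one_div_div, div_sub_div _ _ d1 d3,
      show (1:ℝ) * (2 * n + 2 - α) - ((n:ℝ) + 1) * 2 = -α by ring,
      neg_div, mul_neg, mul_one_div]
  rw [funext hterm, tsum_mul_left] at hB
  rw [hB, one_div, inv_mul_cancel_left₀ hα₁.ne']
end

section
/- For α ∈ (0,1), the integral ∫₀¹ log(1-u) / u^{1+α} du equals (1/α)(γ + ψ(1-α)). -/
open Real MeasureTheory Set

open Filter Topology

local notation "γ" => Real.eulerMascheroniConstant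


lemma sum_term_eq (α : ℝ) (hα₁ : 0 < α) (hα₂ : α < 1) (n : ℕ) :
    ∫ u in Ioo (0:ℝ) 1, u ^ ((n:ℝ) - α) = 1 / ((n:ℝ) + 1 - α) := by
  have hc : (-1:ℝ) < (n:ℝ) - α := by
    have : (0:ℝ) ≤ n := n.cast_nonneg; linarith
  rw [← integral_Ioc_eq_integral_Ioo, ← intervalIntegral.integral_of_le (by norm_num : (0:ℝ) ≤ 1),
    integral_rpow (Or.inl hc)]
  rw [one_rpow, Real.zero_rpow (by linarith : (n:ℝ) - α + 1 ≠ 0)]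
  ring_nf

lemma intOn (α : ℝ) (hα₁ : 0 < α) (hα₂ : α < 1) (n : ℕ) :
    IntegrableOn (fun u : ℝ => u ^ ((n:ℝ) - α)) (Ioo (0:ℝ) 1) := by
  have hc : (-1:ℝ) < (n:ℝ) - α := by
    have : (0:ℝ) ≤ n := n.cast_nonneg; linarith
  have := (intervalIntegral.intervalIntegrable_rpow' (a := 0) (b := 1) hc)
  rw [intervalIntegrable_iff_integrableOn_Ioc_of_le (by norm_num : (0:ℝ) ≤ 1)] at this
  exact this.mono_set Ioo_subset_Ioc_self

lemma summ (α : ℝ) (hα₁ : 0 < α) (hα₂ : α < 1) :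
    Summable (fun n : ℕ => 1 / (((n:ℝ) + 1) * ((n:ℝ) + 1 - α))) := by
  have h2 : Summable (fun n : ℕ => 1 / ((1 - α) * ((n:ℝ) + 1) ^ 2)) := by
    simp_rw [one_div, mul_inv, ← one_div (((_:ℝ)+1)^2)]
    apply Summable.mul_left
    have := Real.summable_one_div_nat_pow.mpr (by norm_num : 1 < 2)
    exact_mod_cast (summable_nat_add_iff 1).mpr this
  refine Summable.of_nonneg_of_le (fun n => ?_) (fun n => ?_) h2
  · have hn : (0:ℝ) ≤ n := n.cast_nonneg
    have h : (0:ℝ) < ((n:ℝ)+1)*((n:ℝ)+1-α) := by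
      apply mul_pos (by linarith) (by linarith)
    positivity
  · have hn : (0:ℝ) ≤ n := n.cast_nonneg
    have h1a : (0:ℝ) < 1 - α := by linarith
    apply one_div_le_one_div_of_le (mul_pos h1a (by positivity))
    nlinarith [mul_nonneg (mul_nonneg hα₁.le hn) hn, mul_nonneg hα₁.le hn]

lemma partA_s5 (α : ℝ) (hα₁ : 0 < α) (hα₂ : α < 1) :
    ∫ u in Ioo (0:ℝ) 1, Real.log (1 - u) / u ^ (1 + α) =
      ∑' n : ℕ, -(1 / (((n:ℝ) + 1) * ((n:ℝ) + 1 - α))) := by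
  set F : ℕ → ℝ → ℝ := fun n u => -(u ^ ((n:ℝ) - α) / ((n:ℝ) + 1)) with hF
  have hint : ∀ n, Integrable (F n) (volume.restrict (Ioo (0:ℝ) 1)) := fun n =>
    (((intOn α hα₁ hα₂ n).div_const _).neg)
  have hFi : ∀ n, ∫ u in Ioo (0:ℝ) 1, F n u = -(1 / (((n:ℝ) + 1) * ((n:ℝ) + 1 - α))) := by
    intro n
    simp only [hF]
    rw [integral_neg, integral_div, sum_term_eq α hα₁ hα₂ n, div_div, one_div, one_div, mul_comm]
  have hnorm : ∀ n, ∫ u in Ioo (0:ℝ) 1, ‖F n u‖ = 1 / (((n:ℝ) + 1) * ((n:ℝ) + 1 - α)) := by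
    intro n
    have hae : ∀ᵐ u ∂(volume.restrict (Ioo (0:ℝ) 1)), ‖F n u‖ = -(F n u) := by
      filter_upwards [ae_restrict_mem measurableSet_Ioo] with u hu
      have h0 : (0:ℝ) ≤ u ^ ((n:ℝ) - α) := rpow_nonneg hu.1.le _
      rw [Real.norm_eq_abs, abs_of_nonpos (neg_nonpos.mpr (div_nonneg h0 (by positivity)))]
    rw [integral_congr_ae hae, integral_neg, hFi n, neg_neg]
  have hsum : Summable (fun n : ℕ => ∫ u in Ioo (0:ℝ) 1, ‖F n u‖) := by
    rw [funext hnorm]; exact summ α hα₁ hα₂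
  have hswap := MeasureTheory.integral_tsum_of_summable_integral_norm hint hsum
  have hptwise : ∫ u in Ioo (0:ℝ) 1, (∑' n, F n u) =
      ∫ u in Ioo (0:ℝ) 1, Real.log (1 - u) / u ^ (1 + α) := by
    apply integral_congr_ae
    filter_upwards [ae_restrict_mem measurableSet_Ioo] with u hu
    have hu0 : (0:ℝ) < u := hu.1
    have habs : |u| < 1 := by rw [abs_of_pos hu0]; exact hu.2
    have h1 := (Real.hasSum_pow_div_log_of_abs_lt_one habs).mul_right (u ^ (-(1+α)))
    have h2 := h1.neg
    have h4 : HasSum (fun n => F n u) (Real.log (1 - u) * u ^ (-(1+α))) := by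
      have heq : ∀ n : ℕ, F n u = -(u ^ (n + 1) / ((n:ℝ) + 1) * u ^ (-(1+α))) := by
        intro n
        simp only [hF]
        rw [div_mul_eq_mul_div, ← Real.rpow_natCast u (n+1), ← Real.rpow_add hu0]
        congr 2
        push_cast; ring
      rw [funext heq]
      simpa using h2
    rw [h4.tsum_eq, Real.rpow_neg hu0.le, div_eq_mul_inv]
  rw [← hptwise, ← hswap]
  exact tsum_congr hFi

lemma hderGamma {y : ℝ} (hy : 0 < y) : DifferentiableAt ℝ Real.Gamma y :=
  Real.differentiableAt_Gamma (fun m => by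
    have : (0:ℝ) ≤ m := m.cast_nonneg
    intro h; rw [h] at hy; linarith)

lemma hderf {y : ℝ} (hy : 0 < y) : DifferentiableAt ℝ (Real.log ∘ Real.Gamma) y :=
  (hderGamma hy).log (Real.Gamma_pos_of_pos hy).ne'

lemma digamma_eq {y : ℝ} (hy : 0 < y) : digamma y = deriv (Real.log ∘ Real.Gamma) y := by
  rw [digamma, Function.comp_def, deriv.log (hderGamma hy) (Real.Gamma_pos_of_pos hy).ne']

lemma derivf_rec {y : ℝ} (hy : 0 < y) :
    deriv (Real.log ∘ Real.Gamma) (y + 1) = deriv (Real.log ∘ Real.Gamma) y + 1 / y := by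
  rw [← deriv_comp_add_const, one_div, ← Real.deriv_log,
    ← deriv_add (hderf hy) (Real.differentiableAt_log hy.ne')]
  apply Filter.EventuallyEq.deriv_eq
  filter_upwards [eventually_gt_nhds hy] with t ht
  simp only [Function.comp_apply, Real.Gamma_add_one ht.ne',
    Real.log_mul ht.ne' (Real.Gamma_pos_of_pos ht).ne', add_comm, Pi.add_apply]

lemma derivf_nat (n : ℕ) :
    deriv (Real.log ∘ Real.Gamma) ((n:ℝ) + 1) = -γ + harmonic n := by
  rw [Function.comp_def, deriv.log (hderGamma (by positivity)) (Real.Gamma_pos_of_pos (by positivity)).ne',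
    Real.deriv_Gamma_nat, Real.Gamma_nat_eq_factorial,
    mul_div_assoc, mul_comm, div_mul_cancel₀ _ (by exact_mod_cast n.factorial_ne_zero : ((n.factorial:ℝ)) ≠ 0)]

lemma derivf_shift (x : ℝ) (hx : 0 < x) (N : ℕ) :
    deriv (Real.log ∘ Real.Gamma) (x + ((N:ℝ) + 1)) =
      deriv (Real.log ∘ Real.Gamma) x + ∑ k ∈ Finset.range (N + 1), 1 / (x + k) := by
  induction N with
  | zero => simpa using derivf_rec hx
  | succ n ih =>
    have hpos : 0 < x + ((n:ℝ) + 1) := by positivity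
    have h1 : x + ((↑(n+1):ℝ) + 1) = (x + ((n:ℝ) + 1)) + 1 := by push_cast; ring
    rw [h1, derivf_rec hpos, ih, Finset.sum_range_succ (f := fun k : ℕ => 1 / (x + k)) (n := n+1), add_assoc]
    congr 2
    push_cast; ring

lemma partB (α : ℝ) (hα₁ : 0 < α) (hα₂ : α < 1) :
    γ + digamma (1 - α) = ∑' n : ℕ, (1 / ((n:ℝ) + 1) - 1 / ((n:ℝ) + 1 - α)) := by
  set x : ℝ := 1 - α with hxdef
  have hx : 0 < x := by simp [hxdef]; linarith
  have hx1 : x < 1 := by simp [hxdef]; linarith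
  set f := Real.log ∘ Real.Gamma with hfdef
  set g : ℕ → ℝ := fun n => 1 / ((n:ℝ) + 1) - 1 / ((n:ℝ) + 1 - α) with hgdef
  -- summability of g
  have hgeq : ∀ n : ℕ, g n = -α * (1 / (((n:ℝ) + 1) * ((n:ℝ) + 1 - α))) := by
    intro n
    have h1 : ((n:ℝ) + 1) ≠ 0 := by positivity
    have h2 : ((n:ℝ) + 1 - α) ≠ 0 := by
      have : (0:ℝ) ≤ n := n.cast_nonneg; intro h; nlinarith
    simp only [hgdef]
    rw [div_sub_div _ _ h1 h2, mul_one_div]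
    congr 1
    ring
  have hgsum : Summable g := by
    rw [funext hgeq]; exact (summ α hα₁ hα₂).mul_left _
  -- harmonic cast
  have hharm : ∀ n : ℕ, ((harmonic n : ℚ) : ℝ) = ∑ i ∈ Finset.range n, 1 / ((i:ℝ) + 1) := by
    intro n
    rw [harmonic]
    push_cast
    simp [one_div]
  -- monotonicity of deriv f
  have hmono := Real.convexOn_log_Gamma.monotoneOn_deriv (fun y hy => hderf (mem_Ioi.mp hy))
  set ψ := deriv f x with hψ
  -- partial sums
  set P : ℕ → ℝ := fun N => ∑ k ∈ Finset.range (N + 1), g k with hP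
  have hbound : ∀ N : ℕ, γ + ψ ≤ P N ∧ P N ≤ γ + ψ + 1 / ((N:ℝ) + 1) := by
    intro N
    have hS := derivf_shift x hx N
    have hxN : (0:ℝ) < x + ((N:ℝ) + 1) := by positivity
    have hL : deriv f ((N:ℝ) + 1) ≤ deriv f (x + ((N:ℝ) + 1)) :=
      hmono (mem_Ioi.mpr (by positivity)) (mem_Ioi.mpr hxN) (by linarith)
    have hU : deriv f (x + ((N:ℝ) + 1)) ≤ deriv f ((↑(N + 1):ℝ) + 1) :=
      hmono (mem_Ioi.mpr hxN) (mem_Ioi.mpr (by positivity)) (by push_cast; linarith)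
    rw [derivf_nat N] at hL
    rw [derivf_nat (N + 1)] at hU
    rw [hS] at hL hU
    have hPS : P N = ((harmonic (N+1) : ℚ) : ℝ) - ∑ k ∈ Finset.range (N + 1), 1 / (x + k) := by
      simp only [hP, hgdef, hharm, Finset.sum_sub_distrib]
      congr 1
      apply Finset.sum_congr rfl
      intro k _
      congr 1
      simp [hxdef]; ring
    have hstep : ((harmonic (N+1) : ℚ) : ℝ) = ((harmonic N : ℚ) : ℝ) + 1 / ((N:ℝ) + 1) := by
      rw [hharm, hharm, Finset.sum_range_succ]
    constructor
    · rw [hPS]; linarith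
    · rw [hPS, hstep]; linarith
  -- limits
  have hPtendsto : Tendsto P atTop (𝓝 (∑' n, g n)) :=
    (hgsum.hasSum.tendsto_sum_nat).comp (tendsto_add_atTop_nat 1)
  have hPtendsto' : Tendsto P atTop (𝓝 (γ + ψ)) := by
    have h0 : Tendsto (fun N : ℕ => γ + ψ + 1 / ((N:ℝ) + 1)) atTop (𝓝 (γ + ψ)) := by
      have := (tendsto_one_div_add_atTop_nhds_zero_nat : Tendsto (fun n : ℕ => 1 / ((n:ℝ) + 1)) atTop (𝓝 0))
      simpa using (tendsto_const_nhds (x := γ + ψ) (f := atTop)).add this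
    exact tendsto_of_tendsto_of_tendsto_of_le_of_le tendsto_const_nhds h0
      (fun N => (hbound N).1) (fun N => (hbound N).2)
  have := tendsto_nhds_unique hPtendsto' hPtendsto
  rw [digamma_eq hx, ← hfdef, ← hψ, this]

theorem stmt_5 (α : ℝ) (hα₁ : 0 < α) (hα₂ : α < 1) :
    ∫ u in Ioo (0 : ℝ) 1, Real.log (1 - u) / u ^ (1 + α) =
      (1 / α) * (Real.eulerMascheroniConstant + digamma (1 - α)) := by
  rw [partA_s5 α hα₁ hα₂, partB α hα₁ hα₂, ← tsum_mul_left]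
  apply tsum_congr
  intro n
  have h1 : ((n:ℝ) + 1) ≠ 0 := by positivity
  have h2 : ((n:ℝ) + 1 - α) ≠ 0 := by
    have : (0:ℝ) ≤ n := n.cast_nonneg
    intro h; nlinarith
  rw [div_sub_div _ _ h1 h2, div_mul_div_comm, one_mul, ← neg_div]
  rw [div_eq_div_iff (by positivity) (mul_ne_zero hα₁.ne' (mul_ne_zero h1 h2))]
  ring
end

section
/- Let U be an (M+1)×(M+1) real matrix with U_{k,ℓ} ≥ 0 for 0 ≤ k < ℓ ≤ M and all other entries zero, and let A₁,...,A_M > 0. Then there exists a unique strictly lower triangular matrix L (L_{k,ℓ} = 0 for ℓ ≥ k) satisfying: (i) L_{m,m-1} = (UL)_{m,m} + A_m for m = 1,...,M; and (ii) L_{k,ℓ} = L_{ℓ+1,ℓ} + L_{ℓ+2,ℓ+1} + ... + L_{k,k-1} for 0 ≤ ℓ < k ≤ M. Moreover all strictly lower triangular entries of L are positive: L_{k,ℓ} > 0 for 0 ≤ ℓ < k ≤ M. -/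
open Finset
open Fin.NatCast

noncomputable def dd (M : ℕ) (U : Matrix (Fin (M+1)) (Fin (M+1)) ℝ)
    (A : Fin (M+1) → ℝ) (m : ℕ) : ℝ :=
  A m + ∑ ℓ ∈ (Finset.Ioc m M).attach,
    U m ℓ.1 * ∑ j ∈ (Finset.Ioc m ℓ.1).attach, dd M U A j.1
termination_by M - m
decreasing_by
  have h1 := Finset.mem_Ioc.mp ℓ.2
  have h2 := Finset.mem_Ioc.mp j.2
  omega

lemma dd_eq (M : ℕ) (U : Matrix (Fin (M+1)) (Fin (M+1)) ℝ)
    (A : Fin (M+1) → ℝ) (m : ℕ) :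
    dd M U A m = A m + ∑ ℓ ∈ Finset.Ioc m M,
      U m ℓ * ∑ j ∈ Finset.Ioc m ℓ, dd M U A j := by
  rw [dd]
  congr 1
  rw [← Finset.sum_attach (Finset.Ioc m M)
    (fun ℓ => U m ℓ * ∑ j ∈ Finset.Ioc m ℓ, dd M U A j)]
  refine Finset.sum_congr rfl fun ℓ _ => ?_
  congr 1
  exact Finset.sum_attach _ _

lemma sum_Ioc_range (m ℓ : ℕ) (f : ℕ → ℝ) :
    ∑ j ∈ Finset.Ioc m ℓ, f j = ∑ r ∈ Finset.range (ℓ - m), f (m + r + 1) := by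
  rw [show Finset.Ioc m ℓ = Finset.Ico (m+1) (ℓ+1) from by ext; simp, Finset.sum_Ico_eq_sum_range]
  simp only [Nat.add_sub_add_right]
  exact Finset.sum_congr rfl fun r _ => by congr 1; omega

lemma fin_cast_lt (M a b : ℕ) (ha : a ≤ M) (hb : b ≤ M) :
    ((a : Fin (M+1)) < (b : Fin (M+1))) ↔ a < b := by
  rw [Fin.lt_def, Fin.val_cast_of_lt (by omega), Fin.val_cast_of_lt (by omega)]

-- (U * L) at (m,m) as a sum over ℕ-indices in Ioc m M
lemma mulApply (M : ℕ) (U : Matrix (Fin (M+1)) (Fin (M+1)) ℝ)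
    (hU_zero : ∀ k ℓ : Fin (M + 1), ¬ k < ℓ → U k ℓ = 0)
    (L : Matrix (Fin (M+1)) (Fin (M+1)) ℝ) (m : ℕ) (h2 : m ≤ M) :
    (U * L) (m : Fin (M+1)) (m : Fin (M+1)) =
      ∑ ℓ ∈ Finset.Ioc m M, U (m : Fin (M+1)) (ℓ : Fin (M+1)) * L ℓ m := by
  rw [Matrix.mul_apply]
  rw [show (Finset.univ : Finset (Fin (M+1))) = Finset.univ from rfl]
  have h1 : ∑ j : Fin (M+1), U (m : Fin (M+1)) j * L j (m : Fin (M+1))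
      = ∑ n ∈ Finset.range (M+1),
        U (m : Fin (M+1)) (n : Fin (M+1)) * L (n : Fin (M+1)) (m : Fin (M+1)) := by
    rw [← Fin.sum_univ_eq_sum_range
      (fun n => U (m : Fin (M+1)) (n : Fin (M+1)) * L (n : Fin (M+1)) (m : Fin (M+1)))]
    refine Finset.sum_congr rfl fun j _ => by rw [Fin.cast_val_eq_self]
  rw [h1]
  symm
  apply Finset.sum_subset
  · intro x hx
    have := Finset.mem_Ioc.mp hx
    simp only [Finset.mem_range]; omega
  · intro x hx hx'
    have h3 : x ≤ M := by simp only [Finset.mem_range] at hx; omega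
    have h4 : ¬ m < x := by
      intro h; exact hx' (Finset.mem_Ioc.mpr ⟨h, h3⟩)
    rw [hU_zero _ _ (by rw [fin_cast_lt M m x h2 h3]; exact h4), zero_mul]

lemma dd_pos (M : ℕ) (U : Matrix (Fin (M+1)) (Fin (M+1)) ℝ)
    (hU_nonneg : ∀ k ℓ : Fin (M + 1), k < ℓ → 0 ≤ U k ℓ)
    (A : Fin (M+1) → ℝ) (hA : ∀ m : Fin (M + 1), m ≠ 0 → 0 < A m)
    (m : ℕ) (h1 : 1 ≤ m) (h2 : m ≤ M) : 0 < dd M U A m := by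
  have key : ∀ t : ℕ, ∀ m : ℕ, 1 ≤ m → m ≤ M → M - m ≤ t → 0 < dd M U A m := by
    intro t
    induction t with
    | zero =>
      intro m h1 h2 ht
      rw [dd_eq]
      have : Finset.Ioc m M = ∅ := by
        rw [Finset.Ioc_eq_empty_iff]
        omega
      rw [this, Finset.sum_empty, add_zero]
      apply hA
      have hv : ((m : Fin (M+1)) : ℕ) = m := Fin.val_cast_of_lt (by omega)
      intro h; rw [h] at hv; simp at hv; omega
    | succ t ih0 =>
      intro m h1 h2 ht
      rw [dd_eq]
      have hApos : 0 < A (m : Fin (M+1)) := by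
        apply hA
        have hv : ((m : Fin (M+1)) : ℕ) = m := Fin.val_cast_of_lt (by omega)
        intro h; rw [h] at hv; simp at hv; omega
      have hsum : 0 ≤ ∑ ℓ ∈ Finset.Ioc m M, U m ℓ * ∑ j ∈ Finset.Ioc m ℓ, dd M U A j := by
        apply Finset.sum_nonneg
        intro ℓ hℓ
        have hℓ' := Finset.mem_Ioc.mp hℓ
        apply mul_nonneg
        · exact hU_nonneg _ _ ((fin_cast_lt M m ℓ (by omega) (by omega)).mpr hℓ'.1)
        · apply Finset.sum_nonneg
          intro j hj
          have hj' := Finset.mem_Ioc.mp hj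
          exact le_of_lt (ih0 j (by omega) (by omega) (by omega))
      linarith
  exact key (M - m) m h1 h2 le_rfl

noncomputable def LL (M : ℕ) (U : Matrix (Fin (M+1)) (Fin (M+1)) ℝ)
    (A : Fin (M+1) → ℝ) : Matrix (Fin (M+1)) (Fin (M+1)) ℝ :=
  fun k ℓ => if (ℓ : ℕ) < (k : ℕ) then ∑ j ∈ Finset.Ioc (ℓ : ℕ) (k : ℕ), dd M U A j else 0

lemma LL_apply_nat (M : ℕ) (U : Matrix (Fin (M+1)) (Fin (M+1)) ℝ)
    (A : Fin (M+1) → ℝ) (k ℓ : ℕ) (h : ℓ < k) (hk : k ≤ M) :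
    LL M U A (k : Fin (M+1)) (ℓ : Fin (M+1)) = ∑ j ∈ Finset.Ioc ℓ k, dd M U A j := by
  have hk' : ((k : Fin (M+1)) : ℕ) = k := Fin.val_cast_of_lt (by omega)
  have hℓ' : ((ℓ : Fin (M+1)) : ℕ) = ℓ := Fin.val_cast_of_lt (by omega)
  rw [LL, hk', hℓ', if_pos h]

-- the step of the uniqueness induction (also used for the construction)
lemma sub_step (M : ℕ) (U : Matrix (Fin (M+1)) (Fin (M+1)) ℝ)
    (hU_zero : ∀ k ℓ : Fin (M + 1), ¬ k < ℓ → U k ℓ = 0)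
    (A : Fin (M+1) → ℝ) (L : Matrix (Fin (M+1)) (Fin (M+1)) ℝ)
    (m : ℕ) (h1 : 1 ≤ m) (h2 : m ≤ M)
    (hb : L (m : Fin (M+1)) ((m - 1 : ℕ) : Fin (M+1)) =
      (U * L) (m : Fin (M+1)) (m : Fin (M+1)) + A (m : Fin (M+1)))
    (hc : ∀ k ℓ : ℕ, ℓ < k → k ≤ M →
      L (k : Fin (M+1)) (ℓ : Fin (M+1)) =
        ∑ r ∈ Finset.range (k - ℓ),
          L ((ℓ + r + 1 : ℕ) : Fin (M+1)) ((ℓ + r : ℕ) : Fin (M+1)))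
    (ihs : ∀ j : ℕ, m < j → j ≤ M →
      L (j : Fin (M+1)) ((j - 1 : ℕ) : Fin (M+1)) = dd M U A j) :
    L (m : Fin (M+1)) ((m - 1 : ℕ) : Fin (M+1)) = dd M U A m := by
  rw [hb, mulApply M U hU_zero L m h2, dd_eq, add_comm]
  congr 1
  refine Finset.sum_congr rfl fun ℓ hℓ => ?_
  have hℓ' := Finset.mem_Ioc.mp hℓ
  congr 1
  rw [hc ℓ m hℓ'.1 hℓ'.2, sum_Ioc_range]
  refine Finset.sum_congr rfl fun r hr => ?_
  have hr' := Finset.mem_range.mp hr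
  have := ihs (m + r + 1) (by omega) (by omega)
  rw [show m + r + 1 - 1 = m + r from by omega] at this
  exact this

theorem stmt_14 (M : ℕ) (hM : 1 ≤ M)
    (U : Matrix (Fin (M + 1)) (Fin (M + 1)) ℝ)
    (hU_nonneg : ∀ k ℓ : Fin (M + 1), k < ℓ → 0 ≤ U k ℓ)
    (hU_zero : ∀ k ℓ : Fin (M + 1), ¬ k < ℓ → U k ℓ = 0)
    (A : Fin (M + 1) → ℝ) (hA : ∀ m : Fin (M + 1), m ≠ 0 → 0 < A m) :
    (∃! L : Matrix (Fin (M + 1)) (Fin (M + 1)) ℝ,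
        (∀ k ℓ : Fin (M + 1), ℓ ≥ k → L k ℓ = 0) ∧
        (∀ m : ℕ, 1 ≤ m → m ≤ M →
          L (m : Fin (M + 1)) ((m - 1 : ℕ) : Fin (M + 1)) =
            (U * L) (m : Fin (M + 1)) (m : Fin (M + 1)) + A (m : Fin (M + 1))) ∧
        (∀ k ℓ : ℕ, ℓ < k → k ≤ M →
          L (k : Fin (M + 1)) (ℓ : Fin (M + 1)) =
            ∑ r ∈ Finset.range (k - ℓ),
              L ((ℓ + r + 1 : ℕ) : Fin (M + 1)) ((ℓ + r : ℕ) : Fin (M + 1)))) ∧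
      (∀ L : Matrix (Fin (M + 1)) (Fin (M + 1)) ℝ,
        ((∀ k ℓ : Fin (M + 1), ℓ ≥ k → L k ℓ = 0) ∧
        (∀ m : ℕ, 1 ≤ m → m ≤ M →
          L (m : Fin (M + 1)) ((m - 1 : ℕ) : Fin (M + 1)) =
            (U * L) (m : Fin (M + 1)) (m : Fin (M + 1)) + A (m : Fin (M + 1))) ∧
        (∀ k ℓ : ℕ, ℓ < k → k ≤ M →
          L (k : Fin (M + 1)) (ℓ : Fin (M + 1)) =
            ∑ r ∈ Finset.range (k - ℓ),
              L ((ℓ + r + 1 : ℕ) : Fin (M + 1)) ((ℓ + r : ℕ) : Fin (M + 1)))) →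
        ∀ k ℓ : Fin (M + 1), ℓ < k → 0 < L k ℓ) := by
  -- subdiagonal entries of LL
  have hLLsub : ∀ k ℓ : ℕ, ℓ < k → k ≤ M →
      LL M U A (k : Fin (M+1)) (ℓ : Fin (M+1)) = ∑ j ∈ Finset.Ioc ℓ k, dd M U A j :=
    fun k ℓ h hk => LL_apply_nat M U A k ℓ h hk
  have hsing : ∀ n : ℕ, n + 1 ≤ M →
      LL M U A ((n + 1 : ℕ) : Fin (M+1)) ((n : ℕ) : Fin (M+1)) = dd M U A (n + 1) := by
    intro n hn
    rw [hLLsub (n+1) n (by omega) (by omega), sum_Ioc_range,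
      show n + 1 - n = 1 from by omega, Finset.sum_range_one]
  -- LL satisfies the three conditions
  have hPa : ∀ k ℓ : Fin (M + 1), ℓ ≥ k → LL M U A k ℓ = 0 := by
    intro k ℓ h
    simp only [LL]
    rw [if_neg]
    have := Fin.le_def.mp h
    omega
  have hPc : ∀ k ℓ : ℕ, ℓ < k → k ≤ M →
      LL M U A (k : Fin (M + 1)) (ℓ : Fin (M + 1)) =
        ∑ r ∈ Finset.range (k - ℓ),
          LL M U A ((ℓ + r + 1 : ℕ) : Fin (M + 1)) ((ℓ + r : ℕ) : Fin (M + 1)) := by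
    intro k ℓ h hk
    rw [hLLsub k ℓ h hk, sum_Ioc_range]
    refine Finset.sum_congr rfl fun r hr => ?_
    have hr' := Finset.mem_range.mp hr
    rw [hsing (ℓ + r) (by omega)]
  have hPb : ∀ m : ℕ, 1 ≤ m → m ≤ M →
      LL M U A (m : Fin (M + 1)) ((m - 1 : ℕ) : Fin (M + 1)) =
        (U * LL M U A) (m : Fin (M + 1)) (m : Fin (M + 1)) + A (m : Fin (M + 1)) := by
    intro m h1 h2
    have e1 : LL M U A (m : Fin (M+1)) ((m - 1 : ℕ) : Fin (M+1)) = dd M U A m := by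
      have := hsing (m - 1) (by omega)
      rw [show m - 1 + 1 = m from by omega] at this
      exact this
    rw [e1, mulApply M U hU_zero _ m h2, dd_eq, add_comm]
    congr 1
    refine Finset.sum_congr rfl fun ℓ hℓ => ?_
    have hℓ' := Finset.mem_Ioc.mp hℓ
    rw [hLLsub ℓ m hℓ'.1 hℓ'.2]
  -- uniqueness
  have huniq : ∀ L : Matrix (Fin (M + 1)) (Fin (M + 1)) ℝ,
      ((∀ k ℓ : Fin (M + 1), ℓ ≥ k → L k ℓ = 0) ∧
        (∀ m : ℕ, 1 ≤ m → m ≤ M →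
          L (m : Fin (M + 1)) ((m - 1 : ℕ) : Fin (M + 1)) =
            (U * L) (m : Fin (M + 1)) (m : Fin (M + 1)) + A (m : Fin (M + 1))) ∧
        (∀ k ℓ : ℕ, ℓ < k → k ≤ M →
          L (k : Fin (M + 1)) (ℓ : Fin (M + 1)) =
            ∑ r ∈ Finset.range (k - ℓ),
              L ((ℓ + r + 1 : ℕ) : Fin (M + 1)) ((ℓ + r : ℕ) : Fin (M + 1)))) →
      L = LL M U A := by
    rintro L ⟨ha, hb, hc⟩
    have key : ∀ t : ℕ, ∀ m : ℕ, 1 ≤ m → m ≤ M → M - m ≤ t →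
        L (m : Fin (M+1)) ((m - 1 : ℕ) : Fin (M+1)) = dd M U A m := by
      intro t
      induction t with
      | zero =>
        intro m h1 h2 ht
        exact sub_step M U hU_zero A L m h1 h2 (hb m h1 h2) hc
          (fun j hj1 hj2 => absurd hj2 (by omega))
      | succ t ih0 =>
        intro m h1 h2 ht
        exact sub_step M U hU_zero A L m h1 h2 (hb m h1 h2) hc
          (fun j hj1 hj2 => ih0 j (by omega) (by omega) (by omega))
    have keym : ∀ m : ℕ, 1 ≤ m → m ≤ M →
        L (m : Fin (M+1)) ((m - 1 : ℕ) : Fin (M+1)) = dd M U A m :=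
      fun m h1 h2 => key (M - m) m h1 h2 le_rfl
    funext k ℓ
    by_cases h : (ℓ : ℕ) < (k : ℕ)
    · have hk : (k : ℕ) ≤ M := Nat.lt_succ_iff.mp k.isLt
      have e1 := hc (k : ℕ) (ℓ : ℕ) h hk
      rw [Fin.cast_val_eq_self, Fin.cast_val_eq_self] at e1
      conv_rhs => rw [← Fin.cast_val_eq_self k, ← Fin.cast_val_eq_self ℓ]
      rw [e1, hLLsub (k : ℕ) (ℓ : ℕ) h hk, sum_Ioc_range]
      refine Finset.sum_congr rfl fun r hr => ?_
      have hr' := Finset.mem_range.mp hr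
      have := keym ((ℓ : ℕ) + r + 1) (by omega) (by omega)
      rw [show (ℓ : ℕ) + r + 1 - 1 = (ℓ : ℕ) + r from by omega] at this
      exact this
    · rw [ha k ℓ (Fin.le_def.mpr (by omega)), hPa k ℓ (Fin.le_def.mpr (by omega))]
  constructor
  · exact ⟨LL M U A, ⟨hPa, hPb, hPc⟩, fun L hL => huniq L hL⟩
  · intro L hL k ℓ h
    rw [huniq L hL]
    simp only [LL]
    have h' : (ℓ : ℕ) < (k : ℕ) := Fin.lt_def.mp h
    rw [if_pos h']
    apply Finset.sum_pos
    · intro j hj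
      have hj' := Finset.mem_Ioc.mp hj
      exact dd_pos M U hU_nonneg A hA j (by omega) (by omega)
    · exact Finset.nonempty_Ioc.mpr h'
end
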